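/- arXiv:2208.11837 — 5 statements merged into one kernel-verified Lean document; each statement's English description precedes it below -/
import Mathlib

section
/- Let d be a positive integer greater than 1 and let C be a cycle for the d-map with |C| = n > 1. Then the crossing number of C is at most the number of distinct leading base-d digits of elements of C: η(C) ≤ dig(C). -/
open MeasureTheory

noncomputable section

/-- The `d`-map `x ↦ d·x (mod 1)` on the circle `ℝ/ℤ`. -/
def dMap (d : ℕ) (x : UnitAddCircle) : UnitAddCircle := d • x

/-- A cycle for the `d`-map: a finite nonempty set on which the `d`-map
restricts to a transitive permutation. -/
def IsCycle (d : ℕ) (C : Finset UnitAddCircle) : Prop :=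
  C.Nonempty ∧ (∀ c ∈ C, dMap d c ∈ C) ∧
    ∀ x ∈ C, ∀ y ∈ C, ∃ k : ℕ, (dMap d)^[k] x = y

/-- A continuous circle map of degree `m`: it admits a continuous lift
`F : ℝ → ℝ` with `F (x + 1) = F x + m`. -/
def HasDegree (f : UnitAddCircle → UnitAddCircle) (m : ℕ) : Prop :=
  Continuous f ∧ ∃ F : ℝ → ℝ, Continuous F ∧ (∀ x : ℝ, F (x + 1) = F x + m) ∧
    ∀ x : ℝ, f (x : UnitAddCircle) = ((F x : ℝ) : UnitAddCircle)

/-- The degree of a finite set `C` (e.g. a cycle): the smallest `m` such that some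
continuous degree-`m` circle map agrees with the `d`-map on `C`. -/
def cycleDeg (d : ℕ) (C : Finset UnitAddCircle) : ℕ :=
  sInf {m : ℕ | ∃ f : UnitAddCircle → UnitAddCircle, HasDegree f m ∧ ∀ c ∈ C, f c = dMap d c}

/-- `E_{m,d}`: the closure of the union of all degree-`m` cycles for the `d`-map. -/
def cycleClosure (m d : ℕ) : Set UnitAddCircle :=
  closure {x | ∃ C : Finset UnitAddCircle, IsCycle d C ∧ cycleDeg d C = m ∧ x ∈ C}
/-- The cyclic successor `i ↦ i + 1 (mod n)` on `Fin n`. -/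
def cyclicSucc {n : ℕ} (i : Fin n) : Fin n := ⟨(i.1 + 1) % n, Nat.mod_lt _ i.pos⟩

/-- For a cycle listed as `0 ≤ c 0 < c 1 < … < c (n-1) < 1`, the pair
`(c i, c (i+1))` (indices cyclic, so `c n := c 0`) is a *crossing* if
`0 < frac (d · c (i+1)) < frac (d · c i) < 1`. -/
def IsCrossing (d : ℕ) {n : ℕ} (c : Fin n → ℝ) (i : Fin n) : Prop :=
  0 < Int.fract (d * c (cyclicSucc i)) ∧
    Int.fract (d * c (cyclicSucc i)) < Int.fract (d * c i) ∧
    Int.fract (d * c i) < 1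

/-- The crossing number `η(C)`: the number of crossings. -/
def crossingNumber (d : ℕ) {n : ℕ} (c : Fin n → ℝ) : ℕ :=
  Nat.card {i : Fin n // IsCrossing d c i}

/-- `dig(C)`: the number of digits `j ∈ {0, …, d-1}` that occur as the leading base-`d`
digit of some element of the cycle, i.e. such that `C ∩ [j/d, (j+1)/d) ≠ ∅`. -/
def digitCount (d : ℕ) {n : ℕ} (c : Fin n → ℝ) : ℕ :=
  Nat.card {j : Fin d // ∃ i : Fin n, c i ∈ Set.Ico ((j : ℝ) / d) (((j : ℝ) + 1) / d)}

/-- Lemma 2: for a cycle with more than one element, `η(C) ≤ dig(C)`. -/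
theorem crossingNumber_le_digitCount (d n : ℕ) (hd : 1 < d) (hn : 1 < n)
    (c : Fin n → ℝ) (hmono : StrictMono c) (hrange : ∀ i, c i ∈ Set.Ico (0 : ℝ) 1)
    (C : Finset UnitAddCircle)
    (hC : (C : Set UnitAddCircle) = Set.range (fun i : Fin n => ((c i : ℝ) : UnitAddCircle)))
    (hcyc : IsCycle d C) :
    crossingNumber d c ≤ digitCount d c := by
  classical
  have hd0 : (0:ℝ) < d := by exact_mod_cast Nat.pos_of_ne_zero (by omega)
  set J : Fin n → ℤ := fun i => ⌊(d:ℝ) * c i⌋ with hJdef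
  have hJmono : Monotone J := fun i k h =>
    Int.floor_mono (mul_le_mul_of_nonneg_left (hmono.monotone h) hd0.le)
  have hJ0 : ∀ i, 0 ≤ J i := fun i =>
    Int.floor_nonneg.2 (mul_nonneg hd0.le (hrange i).1)
  have hJd : ∀ i, J i < d := fun i => Int.floor_lt.2 (by
    have := (hrange i).2
    push_cast
    nlinarith)
  -- cyclic successor computations
  have hcs1 : ∀ (i : Fin n) (h : i.1 + 1 < n), cyclicSucc i = ⟨i.1 + 1, h⟩ := by
    intro i h
    apply Fin.ext
    simp [cyclicSucc, Nat.mod_eq_of_lt h]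
  have hcs2 : ∀ (i : Fin n), i.1 = n - 1 → cyclicSucc i = ⟨0, Nat.lt_of_lt_of_le one_pos hn.le⟩ := by
    intro i h
    apply Fin.ext
    simp only [cyclicSucc, h]
    rw [Nat.sub_add_cancel hn.le, Nat.mod_self]
  -- a non-wrap crossing forces the digit to strictly increase
  have step : ∀ (i : Fin n) (h : i.1 + 1 < n), IsCrossing d c i → J i < J ⟨i.1 + 1, h⟩ := by
    intro i h hi
    unfold IsCrossing at hi
    rw [hcs1 i h] at hi
    have hlt : c i < c ⟨i.1 + 1, h⟩ := hmono (by simp [Fin.lt_def])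
    have hxy : (d:ℝ) * c i < (d:ℝ) * c ⟨i.1 + 1, h⟩ := by nlinarith
    have h1 := Int.floor_add_fract ((d:ℝ) * c i)
    have h2 := Int.floor_add_fract ((d:ℝ) * c ⟨i.1 + 1, h⟩)
    have h3 := hi.2.1
    have : (J i : ℝ) < (J ⟨i.1 + 1, h⟩ : ℝ) := by
      simp only [hJdef]
      linarith
    exact_mod_cast this
  -- the digit map
  have hdig : ∀ i, (J i).toNat < d := by
    intro i
    have := hJd i
    omega
  set D : Fin n → Fin d := fun i => ⟨(J i).toNat, hdig i⟩ with hDdef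
  have hDcast : ∀ i, ((D i : ℕ) : ℝ) = (J i : ℝ) := by
    intro i
    simp only [hDdef]
    exact_mod_cast congrArg (fun z : ℤ => (z : ℝ)) (Int.toNat_of_nonneg (hJ0 i))
  have hocc : ∀ i, c i ∈ Set.Ico (((D i : ℕ) : ℝ) / d) ((((D i : ℕ) : ℝ) + 1) / d) := by
    intro i
    rw [hDcast i]
    constructor
    · rw [div_le_iff₀ hd0]
      have := Int.floor_le ((d:ℝ) * c i)
      simp only [hJdef]
      linarith
    · rw [lt_div_iff₀ hd0]
      have := Int.lt_floor_add_one ((d:ℝ) * c i)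
      simp only [hJdef]
      linarith
  -- J at the cyclic successor, compared for two crossings
  have key : ∀ (a b : Fin n), a.1 < b.1 → IsCrossing d c a → IsCrossing d c b →
      J (cyclicSucc b) < J (cyclicSucc a) ∨ J (cyclicSucc a) < J (cyclicSucc b) := by
    intro a b hab ha hb
    have han : a.1 + 1 < n := by omega
    unfold IsCrossing at ha hb
    rw [hcs1 a han]
    by_cases hbw : b.1 = n - 1
    · left
      rw [hcs2 b hbw]
      have h1 : J ⟨0, Nat.lt_of_lt_of_le one_pos hn.le⟩ ≤ J a := hJmono (by simp [Fin.le_def])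
      have h2 := step a han ha
      omega
    · right
      have hbn : b.1 + 1 < n := by omega
      rw [hcs1 b hbn]
      have h1 : J ⟨a.1 + 1, han⟩ ≤ J b := hJmono (by simp [Fin.le_def]; omega)
      have h2 := step b hbn hb
      omega
  -- the injection from crossings to occurring digits
  have hinj : Function.Injective
      (fun i : {i : Fin n // IsCrossing d c i} =>
        (⟨D (cyclicSucc i.1), ⟨cyclicSucc i.1, hocc _⟩⟩ :
          {j : Fin d // ∃ i : Fin n, c i ∈ Set.Ico ((j : ℝ) / d) (((j : ℝ) + 1) / d)})) := by
    intro a b hab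
    simp only [Subtype.mk.injEq, hDdef, Fin.mk.injEq] at hab
    have hJeq : J (cyclicSucc a.1) = J (cyclicSucc b.1) := by
      have h1 := hJ0 (cyclicSucc a.1)
      have h2 := hJ0 (cyclicSucc b.1)
      omega
    rcases lt_trichotomy a.1.1 b.1.1 with h | h | h
    · rcases key a.1 b.1 h a.2 b.2 with h' | h' <;> omega
    · exact Subtype.ext (Fin.ext h)
    · rcases key b.1 a.1 h b.2 a.2 with h' | h' <;> omega
  exact Nat.card_le_card_of_injective _ hinj
end
end

section
/- Let m and d be positive integers with d > 1 and 1 ≤ m ≤ d. Then the Hausdorff dimension of A_{m,d} equals (log m)/(log d). -/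
open MeasureTheory

noncomputable section

/-- `A_{m,d}` as a subset of `ℝ`: real numbers in `[0,1]` admitting a base-`d`
expansion `x = ∑_{i≥1} b_i d^{-i}` all of whose digits `b_i` lie in `{0, 1, …, m-1}`. -/
def lowDigitSet (m d : ℕ) : Set ℝ :=
  {x | ∃ b : ℕ → ℕ, (∀ i, b i < m) ∧ x = ∑' i : ℕ, (b i : ℝ) / (d : ℝ) ^ (i + 1)}

open ENNReal NNReal

namespace LowDigit



/-- summability of digit series -/
lemma summable_digits {d : ℕ} (hd : 1 < d) (b : ℕ → ℕ) {m : ℕ} (hb : ∀ i, b i < m) :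
    Summable (fun i : ℕ => (b i : ℝ) / (d : ℝ) ^ (i + 1)) := by
  have hd1 : (1:ℝ) < d := by exact_mod_cast hd
  refine Summable.of_nonneg_of_le (fun i => by positivity) ?_
     ((summable_geometric_of_lt_one (show (0:ℝ) ≤ (d:ℝ)⁻¹ by positivity)
      (inv_lt_one_of_one_lt₀ hd1)).mul_left (m:ℝ))
  · intro i
    rw [div_eq_mul_inv, ← inv_pow]
    have h1 : (b i : ℝ) ≤ m := by exact_mod_cast (hb i).le
    have h2 : ((d:ℝ)⁻¹) ^ (i+1) ≤ ((d:ℝ)⁻¹) ^ i :=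
      pow_le_pow_of_le_one (by positivity) (inv_le_one_of_one_le₀ hd1.le) (Nat.le_succ i)
    have : (0:ℝ) ≤ ((d:ℝ)⁻¹) ^ (i+1) := by positivity
    nlinarith [pow_nonneg (show (0:ℝ) ≤ (d:ℝ)⁻¹ by positivity) i, (hb i).le]


/-- the geometric tail: ∑_{i≥0} (d-1)/d^(i+n+1) = d^{-n} -/
lemma tsum_tail_geom {d : ℕ} (hd : 1 < d) (n : ℕ) :
    ∑' i : ℕ, ((d:ℝ) - 1) / (d : ℝ) ^ (i + n + 1) = ((d:ℝ) ^ n)⁻¹ := by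
  have hd1 : (1:ℝ) < d := by exact_mod_cast hd
  have h0 : (0:ℝ) < (d:ℝ) := by linarith
  have hlt : (d:ℝ)⁻¹ < 1 := inv_lt_one_of_one_lt₀ hd1
  have hge : ∑' i : ℕ, ((d:ℝ)⁻¹) ^ i = (1 - (d:ℝ)⁻¹)⁻¹ :=
    tsum_geometric_of_lt_one (by positivity) hlt
  calc ∑' i : ℕ, ((d:ℝ) - 1) / (d : ℝ) ^ (i + n + 1)
      = ∑' i : ℕ, (((d:ℝ) - 1) / (d:ℝ) ^ (n+1)) * ((d:ℝ)⁻¹) ^ i := by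
        congr 1; funext i
        rw [div_mul_eq_mul_div, inv_pow, div_eq_div_iff (by positivity) (by positivity),
          pow_add, pow_add]
        field_simp
        ring
    _ = (((d:ℝ) - 1) / (d:ℝ) ^ (n+1)) * (1 - (d:ℝ)⁻¹)⁻¹ := by
        rw [_root_.tsum_mul_left, hge]
    _ = ((d:ℝ) ^ n)⁻¹ := by
        have : 1 - (d:ℝ)⁻¹ = ((d:ℝ) - 1)/d := by field_simp
        rw [this, pow_succ, inv_div, div_mul_eq_mul_div]
        rw [div_eq_iff (by positivity)]
        have h1 : (d:ℝ) - 1 ≠ 0 := by linarith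
        field_simp



/-- value of a digit sequence -/
def val (d : ℕ) (b : ℕ → ℕ) : ℝ := ∑' i, (b i : ℝ) / (d : ℝ) ^ (i + 1)

lemma summable_digits_shift {d m : ℕ} (hd : 1 < d) {b : ℕ → ℕ} (hb : ∀ i, b i < m) (n : ℕ) :
    Summable (fun i : ℕ => (b (i + n) : ℝ) / (d : ℝ) ^ (i + n + 1)) :=
  (summable_nat_add_iff (f := fun i : ℕ => (b i : ℝ) / (d : ℝ) ^ (i + 1)) n).2
    (summable_digits hd b hb)

lemma tail_nonneg {d m : ℕ} {b : ℕ → ℕ} (hb : ∀ i, b i < m) (n : ℕ) :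
    0 ≤ ∑' i : ℕ, (b (i + n) : ℝ) / (d : ℝ) ^ (i + n + 1) :=
  tsum_nonneg (fun i => by positivity)

lemma tail_le {d m : ℕ} (hd : 1 < d) (hm : 1 ≤ m) {b : ℕ → ℕ} (hb : ∀ i, b i < m) (n : ℕ) :
    ∑' i : ℕ, (b (i + n) : ℝ) / (d : ℝ) ^ (i + n + 1)
      ≤ ((m:ℝ) - 1) / ((d:ℝ) - 1) * ((d:ℝ) ^ n)⁻¹ := by
  have hd1 : (1:ℝ) < d := by exact_mod_cast hd
  have hsub : ((d:ℝ) - 1) ≠ 0 := by linarith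
  have hgeom : Summable (fun i : ℕ => ((d:ℝ) - 1) / (d : ℝ) ^ (i + n + 1)) := by
    have h2 := summable_digits_shift (b := fun _ => d - 1) hd (m := d) (fun _ => Nat.sub_lt (by omega) one_pos) n
    convert h2 using 2 with i
    congr 1
    push_cast [Nat.cast_sub (by omega : 1 ≤ d)]
    ring
  have key : ∑' i : ℕ, (b (i + n) : ℝ) / (d : ℝ) ^ (i + n + 1)
      ≤ ∑' i : ℕ, ((m:ℝ) - 1) / ((d:ℝ) - 1) * (((d:ℝ) - 1) / (d : ℝ) ^ (i + n + 1)) := by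
    apply Summable.tsum_le_tsum _ (summable_digits_shift hd hb n) (hgeom.mul_left _)
    intro i
    have heq : ((m:ℝ) - 1) / ((d:ℝ) - 1) * (((d:ℝ) - 1) / (d : ℝ) ^ (i + n + 1))
        = ((m:ℝ) - 1) / (d : ℝ) ^ (i + n + 1) := by field_simp
    rw [heq]
    have hble : (b (i+n) : ℝ) ≤ (m:ℝ) - 1 := by
      have h : (b (i+n) : ℝ) + 1 ≤ (m:ℝ) := by exact_mod_cast hb (i+n)
      linarith
    gcongr
  calc ∑' i : ℕ, (b (i + n) : ℝ) / (d : ℝ) ^ (i + n + 1) ≤ _ := key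
    _ = ((m:ℝ) - 1) / ((d:ℝ) - 1) * ((d:ℝ) ^ n)⁻¹ := by
        rw [_root_.tsum_mul_left, tsum_tail_geom hd]

lemma val_split {d m : ℕ} (hd : 1 < d) {b : ℕ → ℕ} (hb : ∀ i, b i < m) (n : ℕ) :
    val d b = (∑ i ∈ Finset.range n, (b i : ℝ) / (d : ℝ) ^ (i + 1))
      + ∑' i : ℕ, (b (i + n) : ℝ) / (d : ℝ) ^ (i + n + 1) :=
  (Summable.sum_add_tsum_nat_add n (summable_digits hd b hb)).symm

/-- separation estimate: if two digit sequences agree below `n` and differ at `n`,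
their values differ by at least `(d-m)/(d-1) * d^{-(n+1)}`. -/
lemma sep {d m : ℕ} (hd : 1 < d) {b c : ℕ → ℕ} (hb : ∀ i, b i < m) (hc : ∀ i, c i < m)
    {n : ℕ} (hag : ∀ i < n, b i = c i) (hlt : c n < b n) :
    ((d:ℝ) - (m:ℝ)) / ((d:ℝ) - 1) * ((d:ℝ) ^ (n + 1))⁻¹ ≤ val d b - val d c := by
  have hd1 : (1:ℝ) < d := by exact_mod_cast hd
  have hm : 1 ≤ m := by have := hc n; omega
  have hsum : (∑ i ∈ Finset.range (n+1), (b i : ℝ) / (d : ℝ) ^ (i + 1))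
      - (∑ i ∈ Finset.range (n+1), (c i : ℝ) / (d : ℝ) ^ (i + 1))
      = ((b n : ℝ) - (c n : ℝ)) / (d : ℝ) ^ (n + 1) := by
    rw [← Finset.sum_sub_distrib, Finset.sum_range_succ, Finset.sum_eq_zero, zero_add,
      div_sub_div_same]
    intro i hi
    rw [hag i (Finset.mem_range.1 hi), sub_self]
  have h1 : (1:ℝ) ≤ (b n : ℝ) - (c n : ℝ) := by
    have : (c n : ℝ) + 1 ≤ (b n : ℝ) := by exact_mod_cast hlt
    linarith
  have hTb := tail_nonneg (d := d) hb (n+1)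
  have hTc := tail_le hd hm hc (n+1)
  rw [val_split hd hb (n+1), val_split hd hc (n+1)]
  have hP : (0:ℝ) < ((d:ℝ) ^ (n + 1))⁻¹ := by positivity
  have key : ((d:ℝ) - (m:ℝ)) / ((d:ℝ) - 1) * ((d:ℝ) ^ (n + 1))⁻¹
      = ((d:ℝ) ^ (n+1))⁻¹ - ((m:ℝ) - 1) / ((d:ℝ) - 1) * ((d:ℝ) ^ (n + 1))⁻¹ := by
    have hs : ((d:ℝ) - (m:ℝ)) / ((d:ℝ) - 1) = 1 - ((m:ℝ) - 1) / ((d:ℝ) - 1) := by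
      rw [eq_sub_iff_add_eq, ← add_div, div_eq_one_iff_eq (by linarith)]
      ring
    rw [hs, sub_mul, one_mul]
  rw [key]
  have hbn : ((d:ℝ) ^ (n+1))⁻¹ ≤ ((b n : ℝ) - (c n : ℝ)) / (d : ℝ) ^ (n + 1) := by
    rw [le_div_iff₀ (by positivity), inv_mul_cancel₀ (by positivity)]
    exact h1
  linarith

/-- if two digit sequences agree below `n`, their base-`m` values differ by at most `m^{-n}`. -/
lemma diff_le {m : ℕ} (hm : 1 < m) {b c : ℕ → ℕ} (hb : ∀ i, b i < m) (hc : ∀ i, c i < m)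
    {n : ℕ} (hag : ∀ i < n, b i = c i) :
    |val m b - val m c| ≤ ((m:ℝ) ^ n)⁻¹ := by
  have hm1 : (1:ℝ) < m := by exact_mod_cast hm
  have hsum : (∑ i ∈ Finset.range n, (b i : ℝ) / (m : ℝ) ^ (i + 1))
      = ∑ i ∈ Finset.range n, (c i : ℝ) / (m : ℝ) ^ (i + 1) :=
    Finset.sum_congr rfl (fun i hi => by rw [hag i (Finset.mem_range.1 hi)])
  have hTb0 := tail_nonneg (d := m) hb n
  have hTc0 := tail_nonneg (d := m) hc n
  have hTb := tail_le hm hm.le hb n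
  have hTc := tail_le hm hm.le hc n
  have hquot : ((m:ℝ) - 1) / ((m:ℝ) - 1) = 1 := div_self (by linarith)
  rw [hquot, one_mul] at hTb hTc
  rw [val_split hm hb n, val_split hm hc n, hsum]
  rw [abs_le]
  constructor <;> · simp only [add_sub_add_left_eq_sub]; linarith

/-- every `y ∈ [0,1]` has a base-`m` expansion with digits `< m`. -/
lemma exists_digits {m : ℕ} (hm : 1 < m) {y : ℝ} (hy : y ∈ Set.Icc (0:ℝ) 1) :
    ∃ e : ℕ → ℕ, (∀ i, e i < m) ∧ y = val m e := by
  have hm1 : (1:ℝ) < m := by exact_mod_cast hm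
  obtain ⟨hy0, hy1⟩ := hy
  rcases eq_or_lt_of_le hy1 with rfl | hy1
  · -- y = 1 : all digits m - 1
    refine ⟨fun _ => m - 1, fun _ => Nat.sub_lt (by omega) one_pos, ?_⟩
    have h := tsum_tail_geom hm 0
    simp only [pow_zero, inv_one] at h
    rw [val, ← h]
    congr 1
    funext i
    congr 1
    push_cast [Nat.cast_sub (by omega : 1 ≤ m)]
    ring
  · -- y < 1
    set N : ℕ → ℕ := fun i => ⌊y * (m:ℝ) ^ i⌋₊ with hN
    have hfl : ∀ i, (N i : ℝ) ≤ y * (m:ℝ) ^ i ∧ y * (m:ℝ) ^ i < N i + 1 := by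
      intro i
      exact ⟨Nat.floor_le (by positivity), Nat.lt_floor_add_one _⟩
    have hstep : ∀ i, m * N i ≤ N (i + 1) ∧ N (i + 1) < m * N i + m := by
      intro i
      obtain ⟨h1, h2⟩ := hfl i
      constructor
      · apply Nat.le_floor
        push_cast
        calc ((m:ℝ) * N i) ≤ m * (y * m ^ i) := by
              have : (0:ℝ) < m := by linarith
              nlinarith
          _ = y * m ^ (i+1) := by ring
      · rw [hN]
        apply (Nat.floor_lt (by positivity : (0:ℝ) ≤ y * (m:ℝ)^(i+1))).2
        push_cast
        calc y * (m:ℝ) ^ (i+1) = m * (y * m ^ i) := by ring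
          _ < m * (N i + 1) := by
              have : (0:ℝ) < m := by linarith
              nlinarith
          _ = m * N i + m := by ring
    set e : ℕ → ℕ := fun i => N (i + 1) - m * N i with he
    have hed : ∀ i, e i < m := fun i => by
      have := hstep i; simp only [he]; omega
    have hrec : ∀ i, (e i : ℝ) = N (i+1) - m * N i := fun i => by
      have := hstep i
      push_cast [he, Nat.cast_sub (this.1)]
      ring
    have hpartial : ∀ n, ∑ i ∈ Finset.range n, (e i : ℝ) / (m:ℝ) ^ (i + 1)
        = (N n : ℝ) / (m:ℝ) ^ n := by
      intro n
      induction n with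
      | zero =>
        simp [hN, Nat.floor_eq_zero.2 (by simpa using hy1)]
      | succ n ih =>
        rw [Finset.sum_range_succ, ih, hrec n]
        field_simp
        ring
    have hsumm := summable_digits hm e hed
    have hS : HasSum (fun i => (e i : ℝ) / (m:ℝ) ^ (i + 1)) (val m e) := hsumm.hasSum
    have hlim1 : Filter.Tendsto (fun n => ∑ i ∈ Finset.range n, (e i : ℝ) / (m:ℝ) ^ (i + 1))
        Filter.atTop (nhds (val m e)) := hS.tendsto_sum_nat
    have hlim2 : Filter.Tendsto (fun n => ∑ i ∈ Finset.range n, (e i : ℝ) / (m:ℝ) ^ (i + 1))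
        Filter.atTop (nhds y) := by
      simp only [hpartial]
      have h0 : Filter.Tendsto (fun n : ℕ => ((m:ℝ) ^ n)⁻¹) Filter.atTop (nhds 0) := by
        simp only [← inv_pow]
        exact tendsto_pow_atTop_nhds_zero_of_lt_one (by positivity)
          (inv_lt_one_of_one_lt₀ hm1)
      have hlow : Filter.Tendsto (fun n : ℕ => y - ((m:ℝ) ^ n)⁻¹) Filter.atTop (nhds y) := by
        simpa using Filter.Tendsto.sub (tendsto_const_nhds (x := y)) h0
      apply tendsto_of_tendsto_of_tendsto_of_le_of_le hlow tendsto_const_nhds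
      · intro n
        obtain ⟨h1, h2⟩ := hfl n
        have hp : (0:ℝ) < (m:ℝ) ^ n := by positivity
        have h3 : y ≤ ((N n : ℝ) + 1) / (m:ℝ)^n := by
          rw [le_div_iff₀ hp]; linarith
        have h4 : ((N n : ℝ) + 1) / (m:ℝ)^n = (N n : ℝ)/(m:ℝ)^n + ((m:ℝ)^n)⁻¹ := by
          rw [add_div, one_div]
        linarith
      · intro n
        obtain ⟨h1, h2⟩ := hfl n
        have hp : (0:ℝ) < (m:ℝ) ^ n := by positivity
        rw [div_le_iff₀ hp]
        exact h1
    refine ⟨e, hed, tendsto_nhds_unique hlim2 hlim1⟩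

lemma tail_le' {d m : ℕ} (hd : 1 < d) (hmd : m ≤ d) {b : ℕ → ℕ} (hb : ∀ i, b i < m) (n : ℕ) :
    ∑' i : ℕ, (b (i + n) : ℝ) / (d : ℝ) ^ (i + n + 1) ≤ ((d:ℝ) ^ n)⁻¹ := by
  have hm : 1 ≤ m := by have := hb 0; omega
  have hd1 : (1:ℝ) < d := by exact_mod_cast hd
  have hmd' : (m:ℝ) ≤ d := by exact_mod_cast hmd
  refine (tail_le hd hm hb n).trans ?_
  have h1 : ((m:ℝ) - 1) / ((d:ℝ) - 1) ≤ 1 := by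
    rw [div_le_one (by linarith)]; linarith
  calc ((m:ℝ) - 1) / ((d:ℝ) - 1) * ((d:ℝ) ^ n)⁻¹ ≤ 1 * ((d:ℝ) ^ n)⁻¹ := by
        apply mul_le_mul_of_nonneg_right h1 (by positivity)
    _ = ((d:ℝ) ^ n)⁻¹ := one_mul _

lemma rpow_log_div_log {d m : ℕ} (hd : 1 < d) (hm : 1 ≤ m) :
    (d:ℝ) ^ (Real.log m / Real.log d) = (m:ℝ) := by
  have hd1 : (1:ℝ) < d := by exact_mod_cast hd
  have hm0 : (0:ℝ) < m := by exact_mod_cast hm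
  have hld : Real.log d ≠ 0 := ne_of_gt (Real.log_pos hd1)
  rw [Real.rpow_def_of_pos (by linarith)]
  rw [mul_div_assoc', mul_comm, mul_div_assoc, div_self hld, mul_one, Real.exp_log hm0]

lemma pow_rpow_log {d m : ℕ} (hd : 1 < d) (hm : 1 ≤ m) (k : ℕ) :
    (((d:ℝ) ^ k) : ℝ) ^ (Real.log m / Real.log d) = (m:ℝ) ^ k := by
  have hd0 : (0:ℝ) ≤ d := by positivity
  rw [← Real.rpow_natCast (d:ℝ) k, ← Real.rpow_mul hd0, mul_comm, Real.rpow_mul hd0,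
    rpow_log_div_log hd hm, Real.rpow_natCast]




lemma mem_lowDigitSet {m d : ℕ} {x : ℝ} :
    x ∈ lowDigitSet m d ↔ ∃ b : ℕ → ℕ, (∀ i, b i < m) ∧ x = val d b := Iff.rfl

def csum (d : ℕ) {n m : ℕ} (σ : Fin n → Fin m) : ℝ :=
  ∑ i : Fin n, ((σ i : ℕ) : ℝ) / (d:ℝ) ^ ((i:ℕ) + 1)

def cube (d : ℕ) {m : ℕ} (n : ℕ) (σ : Fin n → Fin m) : Set ℝ :=
  Set.Icc (csum d σ) (csum d σ + ((d:ℝ) ^ n)⁻¹)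

lemma diam_cube {d m : ℕ} (hd : 1 < d) (n : ℕ) (σ : Fin n → Fin m) :
    Metric.ediam (cube d n σ) = ENNReal.ofReal (((d:ℝ) ^ n)⁻¹) := by
  rw [cube, Real.ediam_Icc, add_sub_cancel_left]

lemma mem_cube {d m : ℕ} (hd : 1 < d) (hmd : m ≤ d) {b : ℕ → ℕ} (hb : ∀ i, b i < m) (n : ℕ) :
    val d b ∈ cube d n (fun i : Fin n => (⟨b i, hb i⟩ : Fin m)) := by
  have hsum_eq : csum d (fun i : Fin n => (⟨b i, hb i⟩ : Fin m))
      = ∑ i ∈ Finset.range n, ((b i : ℝ)) / (d:ℝ) ^ (i + 1) := by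
    rw [csum]
    exact Fin.sum_univ_eq_sum_range (fun j => ((b j : ℝ)) / (d:ℝ) ^ (j + 1)) n
  have hx := val_split hd hb n
  have h0 := tail_nonneg (d := d) hb n
  have h1 := tail_le' hd hmd hb n
  rw [cube, Set.mem_Icc]
  constructor
  · rw [hsum_eq]; linarith
  · rw [hsum_eq]; linarith

lemma sum_diam_pow {d m : ℕ} (hd : 1 < d) (hm : 1 ≤ m) (n : ℕ) :
    (∑ σ : Fin n → Fin m, Metric.ediam (cube d n σ) ^ (Real.log m / Real.log d))
      = (1 : ℝ≥0∞) := by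
  have hα0 : 0 ≤ Real.log m / Real.log d :=
    div_nonneg (Real.log_natCast_nonneg m) (Real.log_nonneg (by exact_mod_cast hd.le))
  have hm0 : (0:ℝ) < m := by exact_mod_cast hm
  have hterm : ∀ σ : Fin n → Fin m,
      Metric.ediam (cube d n σ) ^ (Real.log m / Real.log d)
        = ENNReal.ofReal (((m:ℝ) ^ n)⁻¹) := by
    intro σ
    rw [diam_cube hd n σ, ENNReal.ofReal_rpow_of_nonneg (by positivity) hα0]
    congr 1
    rw [Real.inv_rpow (by positivity), pow_rpow_log hd hm n]
  rw [Finset.sum_congr rfl (fun σ _ => hterm σ), Finset.sum_const]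
  rw [Finset.card_univ, Fintype.card_fun, Fintype.card_fin, Fintype.card_fin, nsmul_eq_mul]
  have hmn : (0:ℝ) < (m:ℝ) ^ n := by positivity
  rw [show ((m ^ n : ℕ) : ℝ≥0∞) = ENNReal.ofReal ((m:ℝ) ^ n) by
    rw [ENNReal.ofReal_pow hm0.le, ENNReal.ofReal_natCast]; push_cast; ring]
  rw [← ENNReal.ofReal_mul hmn.le, mul_inv_cancel₀ hmn.ne', ENNReal.ofReal_one]

lemma dimH_upper {m d : ℕ} (hd : 1 < d) (hm : 1 ≤ m) (hmd : m ≤ d) :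
    dimH (lowDigitSet m d) ≤ ENNReal.ofReal (Real.log m / Real.log d) := by
  set α : ℝ := Real.log m / Real.log d with hα
  have hd1 : (1:ℝ) < d := by exact_mod_cast hd
  have hα0 : 0 ≤ α := div_nonneg (Real.log_natCast_nonneg m) (Real.log_nonneg hd1.le)
  have hμ : μH[α] (lowDigitSet m d) ≤ 1 := by
    have key := Measure.hausdorffMeasure_le_liminf_sum (X := ℝ) (ι := fun n : ℕ => Fin n → Fin m) α (lowDigitSet m d)
      (l := Filter.atTop)
      (fun n : ℕ => ENNReal.ofReal (((d:ℝ) ^ n)⁻¹))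
      (by
        have h0 : Filter.Tendsto (fun n : ℕ => ((d:ℝ) ^ n)⁻¹) Filter.atTop (nhds 0) := by
          simp only [← inv_pow]
          exact tendsto_pow_atTop_nhds_zero_of_lt_one (by positivity)
            (inv_lt_one_of_one_lt₀ hd1)
        simpa using ENNReal.tendsto_ofReal h0)
      (fun n σ => cube d n σ)
      (by
        filter_upwards with n
        intro σ
        rw [diam_cube hd n σ])
      (by
        filter_upwards with n
        rintro x ⟨b, hb, rfl⟩
        exact Set.mem_iUnion.2 ⟨fun i : Fin n => (⟨b i, hb i⟩ : Fin m), mem_cube hd hmd hb n⟩)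
    refine key.trans ?_
    have : (fun n : ℕ => ∑ σ : Fin n → Fin m, Metric.ediam (cube d n σ) ^ α)
        = fun _ : ℕ => (1:ℝ≥0∞) := funext fun n => sum_diam_pow hd hm n
    rw [this, Filter.liminf_const]
  have h1 : μH[α] (lowDigitSet m d) ≠ ⊤ := fun h => by
    rw [h] at hμ; exact (by simp : ¬ (⊤:ℝ≥0∞) ≤ 1) hμ
  have h2 := dimH_le_of_hausdorffMeasure_ne_top (d := α.toNNReal)
    (s := lowDigitSet m d) (by rwa [Real.coe_toNNReal _ hα0])
  rwa [ENNReal.ofReal]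



lemma digits_unique {d m : ℕ} (hd : 1 < d) (hmd : m < d) {b c : ℕ → ℕ}
    (hb : ∀ i, b i < m) (hc : ∀ i, c i < m) (h : val d b = val d c) : b = c := by
  by_contra hne
  have hex : ∃ i, b i ≠ c i := Function.ne_iff.1 hne
  set n := Nat.find hex with hn
  have hag : ∀ i < n, b i = c i := fun i hi => by
    by_contra hib
    exact (Nat.find_min hex hi) hib
  have hne' : b n ≠ c n := Nat.find_spec hex
  have hd1 : (1:ℝ) < d := by exact_mod_cast hd
  have hmd' : (m:ℝ) < d := by exact_mod_cast hmd
  have hpos : 0 < ((d:ℝ) - (m:ℝ)) / ((d:ℝ) - 1) * ((d:ℝ) ^ (n + 1))⁻¹ := by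
    apply _root_.mul_pos (div_pos (by linarith) (by linarith)) (by positivity)
  rcases lt_or_gt_of_ne hne' with hlt | hgt
  · have := sep hd hc hb (fun i hi => (hag i hi).symm) hlt
    rw [← h] at this
    linarith
  · have := sep hd hb hc hag hgt
    rw [h] at this
    linarith

open Classical in
/-- digit sequence of an element of `lowDigitSet`. -/
def digitsOf (m d : ℕ) (x : ℝ) : ℕ → ℕ :=
  if h : ∃ b : ℕ → ℕ, (∀ i, b i < m) ∧ x = val d b then h.choose else fun _ => 0

lemma digitsOf_spec {m d : ℕ} {x : ℝ} (hx : x ∈ lowDigitSet m d) :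
    (∀ i, digitsOf m d x i < m) ∧ x = val d (digitsOf m d x) := by
  rw [mem_lowDigitSet] at hx
  rw [digitsOf]
  rw [dif_pos hx]
  exact hx.choose_spec

/-- the base change map sending `∑ b i d^{-i-1}` to `∑ b i m^{-i-1}`. -/
def gmap (m d : ℕ) (x : ℝ) : ℝ := val m (digitsOf m d x)

lemma holder_gmap {m d : ℕ} (hm : 1 < m) (hmd : m < d) :
    HolderOnWith ((m:ℝ) * ((d:ℝ) - 1) / ((d:ℝ) - (m:ℝ))).toNNReal
      (Real.log m / Real.log d).toNNReal (gmap m d) (lowDigitSet m d) := by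
  have hd : 1 < d := hm.trans hmd
  have hd1 : (1:ℝ) < d := by exact_mod_cast hd
  have hm1 : (1:ℝ) < m := by exact_mod_cast hm
  have hmd' : (m:ℝ) < d := by exact_mod_cast hmd
  set α : ℝ := Real.log m / Real.log d with hα
  have hαpos : 0 < α := div_pos (Real.log_pos hm1) (Real.log_pos hd1)
  have hα1 : α ≤ 1 := by
    rw [div_le_one (Real.log_pos hd1)]
    exact Real.log_le_log (by linarith) (by exact_mod_cast hmd.le)
  set κ : ℝ := ((d:ℝ) - (m:ℝ)) / ((d:ℝ) - 1) with hκ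
  have hκpos : 0 < κ := div_pos (by linarith) (by linarith)
  have hκ1 : κ ≤ 1 := by
    rw [hκ, div_le_one (by linarith)]
    have : (1:ℝ) ≤ m := hm1.le
    linarith
  set C₀ : ℝ := (m:ℝ) * ((d:ℝ) - 1) / ((d:ℝ) - (m:ℝ)) with hC
  have hC₀ : C₀ = (m:ℝ) / κ := by
    rw [hC, hκ, div_div_eq_mul_div]
  intro x hx y hy
  obtain ⟨hbx, hvx⟩ := digitsOf_spec hx
  obtain ⟨hby, hvy⟩ := digitsOf_spec hy
  set b := digitsOf m d x
  set c := digitsOf m d y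
  rcases eq_or_ne b c with hbc | hbc
  · have : gmap m d x = gmap m d y := congrArg (val m) hbc
    rw [this, edist_self]
    exact zero_le
  · have hex : ∃ i, b i ≠ c i := Function.ne_iff.1 hbc
    set n := Nat.find hex with hn
    have hag : ∀ i < n, b i = c i := fun i hi => by
      by_contra hib; exact (Nat.find_min hex hi) hib
    have hne' : b n ≠ c n := Nat.find_spec hex
    -- distance lower bound
    have hdist : κ * ((d:ℝ) ^ (n+1))⁻¹ ≤ |x - y| := by
      rcases lt_or_gt_of_ne hne' with hlt | hgt
      · have := sep hd hby hbx (fun i hi => (hag i hi).symm) hlt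
        rw [← hvx, ← hvy] at this
        calc κ * ((d:ℝ) ^ (n+1))⁻¹ ≤ y - x := this
          _ ≤ |x - y| := by rw [abs_sub_comm]; exact le_abs_self _
      · have := sep hd hbx hby hag hgt
        rw [← hvx, ← hvy] at this
        calc κ * ((d:ℝ) ^ (n+1))⁻¹ ≤ x - y := this
          _ ≤ |x - y| := le_abs_self _
    -- image distance upper bound
    have himg : |gmap m d x - gmap m d y| ≤ ((m:ℝ) ^ n)⁻¹ := diff_le hm hbx hby hag
    -- the real Hölder estimate
    set t : ℝ := |x - y| with ht
    have ht0 : 0 < t := lt_of_lt_of_le (by positivity) hdist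
    have hchain : ((m:ℝ) ^ n)⁻¹ ≤ C₀ * t ^ α := by
      have h1 : ((m:ℝ) ^ n)⁻¹ = (m:ℝ) * (((m:ℝ) ^ (n+1))⁻¹) := by
        rw [pow_succ]
        field_simp
      have h2 : (((d:ℝ) ^ (n+1)) : ℝ) ^ α = (m:ℝ) ^ (n+1) := pow_rpow_log hd hm.le (n+1)
      have h3 : (((d:ℝ) ^ (n+1))⁻¹ : ℝ) ^ α = ((m:ℝ) ^ (n+1))⁻¹ := by
        rw [Real.inv_rpow (by positivity), h2]
      have h4 : ((d:ℝ) ^ (n+1))⁻¹ ≤ t / κ := by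
        rw [le_div_iff₀ hκpos, mul_comm]
        exact hdist
      have h5 : (((d:ℝ) ^ (n+1))⁻¹ : ℝ) ^ α ≤ (t / κ) ^ α :=
        Real.rpow_le_rpow (by positivity) h4 hαpos.le
      have h6 : (t / κ) ^ α = t ^ α / κ ^ α := Real.div_rpow ht0.le hκpos.le α
      have h7 : κ ≤ κ ^ α := by
        calc κ = κ ^ (1:ℝ) := (Real.rpow_one κ).symm
          _ ≤ κ ^ α := Real.rpow_le_rpow_of_exponent_ge hκpos hκ1 hα1
      have h8 : t ^ α / κ ^ α ≤ t ^ α / κ :=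
        div_le_div_of_nonneg_left (Real.rpow_nonneg (abs_nonneg _) α) hκpos h7
      calc ((m:ℝ) ^ n)⁻¹ = (m:ℝ) * (((m:ℝ) ^ (n+1))⁻¹) := h1
        _ = (m:ℝ) * ((((d:ℝ) ^ (n+1))⁻¹ : ℝ) ^ α) := by rw [h3]
        _ ≤ (m:ℝ) * ((t / κ) ^ α) := by
            apply mul_le_mul_of_nonneg_left h5 (by positivity)
        _ = (m:ℝ) * (t ^ α / κ ^ α) := by rw [h6]
        _ ≤ (m:ℝ) * (t ^ α / κ) := by
            apply mul_le_mul_of_nonneg_left h8 (by positivity)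
        _ = C₀ * t ^ α := by rw [hC₀]; ring
    -- convert to edist
    have hC₀0 : 0 ≤ C₀ := by
      rw [hC]
      apply div_nonneg (mul_nonneg (by positivity) (by linarith)) (by linarith)
    rw [edist_dist, edist_dist, Real.dist_eq, Real.dist_eq]
    calc ENNReal.ofReal |gmap m d x - gmap m d y| ≤ ENNReal.ofReal (C₀ * t ^ α) :=
          ENNReal.ofReal_le_ofReal (himg.trans hchain)
      _ = ENNReal.ofReal C₀ * ENNReal.ofReal (t ^ α) :=
          ENNReal.ofReal_mul hC₀0
      _ = ENNReal.ofReal C₀ * ENNReal.ofReal t ^ α := by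
          rw [ENNReal.ofReal_rpow_of_nonneg (abs_nonneg _) hαpos.le]
      _ = _ := by
          rw [Real.coe_toNNReal α hαpos.le]
          rfl

lemma Icc_subset_image {m d : ℕ} (hm : 1 < m) (hmd : m < d) :
    Set.Icc (0:ℝ) 1 ⊆ gmap m d '' (lowDigitSet m d) := by
  have hd : 1 < d := hm.trans hmd
  intro y hy
  obtain ⟨e, he, hye⟩ := exists_digits hm hy
  refine ⟨val d e, ⟨e, he, rfl⟩, ?_⟩
  have hmem : val d e ∈ lowDigitSet m d := ⟨e, he, rfl⟩
  obtain ⟨hbx, hvx⟩ := digitsOf_spec hmem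
  have : digitsOf m d (val d e) = e :=
    digits_unique hd hmd hbx he hvx.symm
  rw [gmap, this, hye]

lemma dimH_Icc01 : dimH (Set.Icc (0:ℝ) 1) = 1 := by
  rw [Real.dimH_of_nonempty_interior (by rw [interior_Icc]; exact ⟨1/2, by norm_num⟩),
    Module.finrank_self, Nat.cast_one]

lemma dimH_lower {m d : ℕ} (hm : 1 < m) (hmd : m < d) :
    ENNReal.ofReal (Real.log m / Real.log d) ≤ dimH (lowDigitSet m d) := by
  have hd : 1 < d := hm.trans hmd
  have hd1 : (1:ℝ) < d := by exact_mod_cast hd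
  have hm1 : (1:ℝ) < m := by exact_mod_cast hm
  set α : ℝ := Real.log m / Real.log d with hα
  have hαpos : 0 < α := div_pos (Real.log_pos hm1) (Real.log_pos hd1)
  set r : ℝ≥0 := α.toNNReal with hr
  have hrpos : 0 < r := Real.toNNReal_pos.2 hαpos
  have h1 : (1:ℝ≥0∞) ≤ dimH (lowDigitSet m d) / r := by
    calc (1:ℝ≥0∞) = dimH (Set.Icc (0:ℝ) 1) := dimH_Icc01.symm
      _ ≤ dimH (gmap m d '' (lowDigitSet m d)) := dimH_mono (Icc_subset_image hm hmd)
      _ ≤ dimH (lowDigitSet m d) / r := (holder_gmap hm hmd).dimH_image_le hrpos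
  have h2 : (r : ℝ≥0∞) ≤ dimH (lowDigitSet m d) := by
    have := (ENNReal.le_div_iff_mul_le (Or.inl (by exact_mod_cast hrpos.ne'))
      (Or.inl coe_ne_top)).1 h1
    rwa [one_mul] at this
  rwa [ENNReal.ofReal]



lemma lowDigitSet_one {d : ℕ} : lowDigitSet 1 d = {(0:ℝ)} := by
  ext x
  constructor
  · rintro ⟨b, hb, rfl⟩
    have hb0 : ∀ i, b i = 0 := fun i => Nat.lt_one_iff.1 (hb i)
    have : (fun i : ℕ => (b i : ℝ) / (d : ℝ) ^ (i + 1)) = fun _ => (0:ℝ) := by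
      funext i; rw [hb0 i]; simp
    rw [Set.mem_singleton_iff, this, tsum_zero]
  · rintro rfl
    exact ⟨fun _ => 0, fun _ => one_pos, by simp⟩

lemma Icc_subset_lowDigitSet {m : ℕ} (hm : 1 < m) : Set.Icc (0:ℝ) 1 ⊆ lowDigitSet m m := by
  intro y hy
  obtain ⟨e, he, hye⟩ := exists_digits hm hy
  exact ⟨e, he, hye⟩


end LowDigit

open LowDigit

/-- Lemma 4: `dim_H(A_{m,d}) = log m / log d`. -/
theorem dimH_lowDigitSet (m d : ℕ) (hd : 1 < d) (hm : 1 ≤ m) (hmd : m ≤ d) :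
    dimH (lowDigitSet m d) = ENNReal.ofReal (Real.log m / Real.log d) := by
  rcases eq_or_lt_of_le hm with rfl | hm2
  · -- m = 1
    rw [lowDigitSet_one, dimH_singleton]
    rw [Nat.cast_one, Real.log_one, zero_div, ENNReal.ofReal_zero]
  · rcases eq_or_lt_of_le hmd with rfl | hlt
    · -- m = d
      have hm1 : (1:ℝ) < m := by exact_mod_cast hm2
      have hlog : Real.log m / Real.log m = 1 := div_self (Real.log_pos hm1).ne'
      rw [hlog, ENNReal.ofReal_one]
      apply le_antisymm
      · have := dimH_upper hd hm le_rfl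
        rwa [hlog, ENNReal.ofReal_one] at this
      · calc (1:ℝ≥0∞) = dimH (Set.Icc (0:ℝ) 1) := dimH_Icc01.symm
          _ ≤ dimH (lowDigitSet m m) := dimH_mono (Icc_subset_lowDigitSet hm2)
    · -- m < d
      exact le_antisymm (dimH_upper hd hm hmd) (dimH_lower hm2 hlt)
end
end

section
/- Let m and d be positive integers with d > 1 and 1 ≤ m ≤ d, and set β = (log m)/(log d). Then the β-dimensional Hausdorff measure of A_{m,d} is at least 1/(2m); equivalently, for every countable cover (U_r) of A_{m,d} by sets, one has ∑_r |U_r|^β ≥ 1/(2m), where |U| denotes the diameter of U. -/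
open MeasureTheory

noncomputable section

open Finset MeasureTheory
open scoped Classical ENNReal NNReal

lemma baseD_inj (d : ℕ) : ∀ (n : ℕ) (a b : ℕ → ℕ),
    (∀ i, i < n → a i < d) → (∀ i, i < n → b i < d) →
    (∑ i ∈ range n, a i * d ^ i) = (∑ i ∈ range n, b i * d ^ i) →
    ∀ i, i < n → a i = b i := by
  intro n
  induction n with
  | zero => intro a b _ _ _ i hi; omega
  | succ n ih =>
    intro a b ha hb h i hi
    rw [Finset.sum_range_succ', Finset.sum_range_succ'] at h
    have ea : ∀ (c : ℕ → ℕ), ∑ i ∈ range n, c (i+1) * d ^ (i+1)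
        = d * ∑ i ∈ range n, c (i+1) * d ^ i := by
      intro c
      rw [Finset.mul_sum]
      refine Finset.sum_congr rfl fun j _ => by ring
    rw [ea a, ea b] at h
    have ha0 : a 0 < d := ha 0 (Nat.succ_pos n)
    have hb0 : b 0 < d := hb 0 (Nat.succ_pos n)
    simp only [pow_zero, mul_one] at h
    have hmod : a 0 = b 0 := by
      have h1 := congrArg (· % d) h
      simp only [Nat.mul_add_mod] at h1
      rwa [Nat.mod_eq_of_lt ha0, Nat.mod_eq_of_lt hb0] at h1
    have hA : ∑ i ∈ range n, a (i+1) * d ^ i = ∑ i ∈ range n, b (i+1) * d ^ i := by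
      have hd0 : 0 < d := Nat.pos_of_ne_zero (by omega)
      have : d * ∑ i ∈ range n, a (i+1) * d ^ i = d * ∑ i ∈ range n, b (i+1) * d ^ i := by omega
      exact Nat.eq_of_mul_eq_mul_left hd0 this
    rcases Nat.eq_zero_or_pos i with hi0 | hip
    · subst hi0; exact hmod
    · obtain ⟨j, rfl⟩ := Nat.exists_eq_add_of_le hip
      have := ih (fun i => a (i+1)) (fun i => b (i+1))
        (fun i hi => ha (i+1) (by omega)) (fun i hi => hb (i+1) (by omega)) hA j (by omega)
      simpa [Nat.add_comm] using this

def dig {m N : ℕ} (w : Fin N → Fin m) (i : ℕ) : ℕ := if h : i < N then (w ⟨i, h⟩ : ℕ) else 0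

noncomputable def valw (d : ℕ) {m N : ℕ} (w : Fin N → Fin m) : ℝ :=
  ∑ i ∈ range N, (dig w i : ℝ) / (d : ℝ) ^ (i + 1)

lemma geom_aux (d : ℕ) (hd : 1 < d) (K : ℕ) :
    ∑ j ∈ range K, ((d:ℝ) - 1) * ((d:ℝ)⁻¹) ^ (j+1) = 1 - ((d:ℝ)⁻¹) ^ K := by
  have hd1 : (1:ℝ) < d := by exact_mod_cast hd
  have hd0 : (d:ℝ) ≠ 0 := by positivity
  induction K with
  | zero => simp
  | succ K ihK =>
    rw [Finset.sum_range_succ, ihK]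
    have : (d:ℝ) * (d:ℝ)⁻¹ = 1 := mul_inv_cancel₀ hd0
    ring_nf
    field_simp
    ring

lemma dig_le {m N : ℕ} (hm : 0 < m) (w : Fin N → Fin m) (i : ℕ) : dig w i ≤ m - 1 := by
  unfold dig
  split
  · have := (w ⟨i, by assumption⟩).2; omega
  · omega

lemma floor_valw (d : ℕ) (hd : 1 < d) {m N : ℕ} (hm : 0 < m) (hmd : m ≤ d) {n : ℕ} (hnN : n ≤ N)
    (w : Fin N → Fin m) :
    ⌊valw d w * (d:ℝ)^n⌋ = ((∑ j ∈ range n, dig w (n - 1 - j) * d ^ j : ℕ) : ℤ) := by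
  have hd1 : (1:ℝ) < d := by exact_mod_cast hd
  have hdpos : (0:ℝ) < d := by linarith
  have hdne : (d:ℝ) ≠ 0 := ne_of_gt hdpos
  set Q : ℕ := ∑ j ∈ range n, dig w (n - 1 - j) * d ^ j with hQ
  set T : ℝ := ∑ j ∈ range (N - n), (dig w (n + j) : ℝ) * ((d:ℝ)⁻¹) ^ (j+1) with hT
  have hsplit : valw d w * (d:ℝ)^n
      = (∑ i ∈ range n, (dig w i : ℝ) * (d:ℝ)^(n - 1 - i)) + T := by
    rw [valw, Finset.sum_mul, ← Finset.sum_range_add_sum_Ico _ hnN]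
    congr 1
    · refine Finset.sum_congr rfl fun i hi => ?_
      rw [Finset.mem_range] at hi
      have hpow : (d:ℝ)^n = (d:ℝ)^(n-1-i) * (d:ℝ)^(i+1) := by
        rw [← pow_add]; congr 1; omega
      rw [hpow]
      field_simp
    · rw [Finset.sum_Ico_eq_sum_range, hT]
      refine Finset.sum_congr rfl fun j hj => ?_
      have hpow : (d:ℝ)^(n+j+1) = (d:ℝ)^n * (d:ℝ)^(j+1) := by
        rw [← pow_add]
        congr 1
      rw [hpow]
      field_simp
      rw [mul_assoc, ← mul_pow, mul_one_div_cancel hdne, one_pow, mul_one]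
  have hQcast : ((Q:ℝ)) = ∑ i ∈ range n, (dig w i : ℝ) * (d:ℝ)^(n - 1 - i) := by
    have h1 : ((Q:ℝ)) = ∑ j ∈ range n, (dig w (n-1-j) : ℝ) * (d:ℝ)^j := by
      rw [hQ]; push_cast; rfl
    rw [h1, ← Finset.sum_range_reflect (fun i => (dig w i : ℝ) * (d:ℝ)^(n - 1 - i)) n]
    refine Finset.sum_congr rfl fun j hj => ?_
    rw [Finset.mem_range] at hj
    congr 2
    omega
  have hT0 : 0 ≤ T := by
    rw [hT]
    refine Finset.sum_nonneg fun j _ => by positivity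
  have hT1 : T < 1 := by
    have hle : T ≤ ∑ j ∈ range (N - n), ((d:ℝ) - 1) * ((d:ℝ)⁻¹) ^ (j+1) := by
      rw [hT]
      refine Finset.sum_le_sum fun j _ => ?_
      have h1 : dig w (n + j) ≤ d - 1 := le_trans (dig_le hm w _) (by omega)
      have h2 : (dig w (n+j) : ℝ) ≤ (d:ℝ) - 1 := by
        have : ((dig w (n+j) : ℕ) : ℝ) ≤ ((d - 1 : ℕ) : ℝ) := by exact_mod_cast h1
        rwa [Nat.cast_sub (by omega), Nat.cast_one] at this
      have h3 : (0:ℝ) < ((d:ℝ)⁻¹) ^ (j+1) := by positivity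
      nlinarith
    have hgeo := geom_aux d hd (N - n)
    have hcK : (0:ℝ) < ((d:ℝ)⁻¹) ^ (N - n) := by positivity
    linarith
  rw [hsplit, ← hQcast, Int.floor_eq_iff]
  constructor
  · push_cast; linarith
  · push_cast; linarith

lemma counting (d : ℕ) (hd : 1 < d) {m : ℕ} (hm : 0 < m) (hmd : m ≤ d) {n N : ℕ} (hnN : n ≤ N)
    (J : Set ℝ) (hJ : ∀ x ∈ J, ∀ y ∈ J, |x - y| < ((d:ℝ)^n)⁻¹) :
    (Finset.univ.filter (fun w : Fin N → Fin m => valw d w ∈ J)).card ≤ 2 * m ^ (N - n) := by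
  classical
  have hdpos : (0:ℝ) < d := by positivity
  have hdn : (0:ℝ) < (d:ℝ)^n := by positivity
  set F := Finset.univ.filter (fun w : Fin N → Fin m => valw d w ∈ J) with hF
  rcases F.eq_empty_or_nonempty with hFe | hFne
  · simp [hFe]
  have hmemJ : ∀ w ∈ F, valw d w ∈ J := fun w hw => (Finset.mem_filter.mp hw).2
  set k : (Fin N → Fin m) → ℤ := fun w => ⌊valw d w * (d:ℝ)^n⌋ with hk
  have hgap : ∀ w ∈ F, ∀ w' ∈ F, valw d w * (d:ℝ)^n < valw d w' * (d:ℝ)^n + 1 := by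
    intro w hw w' hw'
    have h1 := hJ _ (hmemJ w hw) _ (hmemJ w' hw')
    have h2 : |valw d w * (d:ℝ)^n - valw d w' * (d:ℝ)^n| < 1 := by
      rw [← sub_mul, abs_mul, abs_of_pos hdn]
      calc |valw d w - valw d w'| * (d:ℝ)^n < ((d:ℝ)^n)⁻¹ * (d:ℝ)^n :=
            mul_lt_mul_of_pos_right h1 hdn
        _ = 1 := inv_mul_cancel₀ (ne_of_gt hdn)
    have h3 := abs_lt.mp h2
    linarith [h3.1, h3.2]
  set K := F.image k with hK
  have hKne : K.Nonempty := hFne.image k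
  set k0 := K.min' hKne with hk0
  have hkmem : ∀ w ∈ F, k w ∈ ({k0, k0 + 1} : Finset ℤ) := by
    intro w hw
    obtain ⟨w1, hw1, hkw1⟩ := Finset.mem_image.mp (K.min'_mem hKne)
    have hlow : k0 ≤ k w := K.min'_le _ (Finset.mem_image_of_mem k hw)
    have hup : k w ≤ k0 + 1 := by
      have h1 := hgap w hw w1 hw1
      have h5 : k w ≤ ⌊valw d w1 * (d:ℝ)^n + 1⌋ := Int.floor_le_floor (le_of_lt h1)
      rw [show ((1:ℝ)) = ((1:ℤ):ℝ) by norm_num, Int.floor_add_intCast] at h5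
      have : ⌊valw d w1 * (d:ℝ)^n⌋ = k w1 := rfl
      omega
    simp only [Finset.mem_insert, Finset.mem_singleton]
    omega
  set φ : (Fin N → Fin m) → ℤ × (Fin (N - n) → Fin m) :=
    fun w => (k w, fun j => w ⟨n + j.1, by omega⟩) with hφ
  have hmaps : ∀ w ∈ F, φ w ∈ ({k0, k0+1} : Finset ℤ) ×ˢ (Finset.univ : Finset (Fin (N-n) → Fin m)) := by
    intro w hw
    exact Finset.mem_product.mpr ⟨hkmem w hw, Finset.mem_univ _⟩
  have hinj : Set.InjOn φ F := by
    intro w hw w' hw' heq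
    have hfst : k w = k w' := congrArg Prod.fst heq
    have hsnd : ∀ j : Fin (N - n), w ⟨n + j.1, by omega⟩ = w' ⟨n + j.1, by omega⟩ :=
      fun j => congrFun (congrArg Prod.snd heq) j
    have hQeq : (∑ j ∈ range n, dig w (n - 1 - j) * d ^ j)
        = ∑ j ∈ range n, dig w' (n - 1 - j) * d ^ j := by
      have h6 := hfst
      rw [hk] at h6
      simp only at h6
      rw [floor_valw d hd hm hmd hnN w, floor_valw d hd hm hmd hnN w'] at h6
      exact_mod_cast h6
    have hpre : ∀ i, i < n → dig w i = dig w' i := by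
      have h1 := baseD_inj d n (fun j => dig w (n - 1 - j)) (fun j => dig w' (n - 1 - j))
        (fun j hj => by show dig w (n-1-j) < d; have := dig_le hm w (n-1-j); omega)
        (fun j hj => by show dig w' (n-1-j) < d; have := dig_le hm w' (n-1-j); omega) hQeq
      intro i hi
      have h7 := h1 (n - 1 - i) (by omega)
      simpa [show n - 1 - (n - 1 - i) = i by omega] using h7
    funext i
    rcases lt_or_ge i.1 n with hin | hin
    · have h2 := hpre i.1 hin
      unfold dig at h2
      rw [dif_pos i.2, dif_pos i.2] at h2
      simp only [Fin.eta] at h2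
      exact Fin.ext h2
    · have h3 := hsnd ⟨i.1 - n, by omega⟩
      have h4 : (⟨n + (i.1 - n), by omega⟩ : Fin N) = i := by
        apply Fin.ext; simp; omega
      rwa [h4] at h3
  calc F.card ≤ (({k0, k0+1} : Finset ℤ) ×ˢ (Finset.univ : Finset (Fin (N-n) → Fin m))).card :=
        Finset.card_le_card_of_injOn φ hmaps hinj
    _ ≤ 2 * m ^ (N - n) := by
        rw [Finset.card_product]
        have h1 : ({k0, k0+1} : Finset ℤ).card ≤ 2 :=
          le_trans (Finset.card_insert_le _ _) (by simp)
        have h2 : (Finset.univ : Finset (Fin (N-n) → Fin m)).card = m ^ (N - n) := by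
          simp [Finset.card_univ]
        rw [h2]
        exact Nat.mul_le_mul_right _ h1

lemma valw_mem (d : ℕ) {m N : ℕ} (hm : 0 < m) (w : Fin N → Fin m) :
    valw d w ∈ lowDigitSet m d := by
  refine ⟨dig w, fun i => by have := dig_le hm w i; omega, ?_⟩
  rw [valw, tsum_eq_sum (s := Finset.range N) ?_]
  intro i hi
  rw [Finset.mem_range, not_lt] at hi
  have : dig w i = 0 := by unfold dig; rw [dif_neg (by omega)]
  simp [this]

lemma zero_mem_lowDigitSet (m d : ℕ) (hm : 0 < m) : (0:ℝ) ∈ lowDigitSet m d :=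
  ⟨fun _ => 0, fun _ => hm, by simp⟩

lemma isCompact_lowDigitSet (m d : ℕ) (hd : 1 < d) : IsCompact (lowDigitSet m d) := by
  have hdpos : (0:ℝ) < d := by positivity
  have hc1 : (d:ℝ)⁻¹ < 1 := by
    rw [inv_lt_one_iff₀]; right; exact_mod_cast hd
  set f : (ℕ → Fin m) → ℝ := fun b => ∑' i : ℕ, ((b i : ℕ) : ℝ) / (d : ℝ) ^ (i + 1) with hf
  have hcont : Continuous f := by
    apply continuous_tsum (u := fun i => (m:ℝ) * (d:ℝ)⁻¹ * ((d:ℝ)⁻¹)^i)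
    · intro i
      have hap : Continuous fun b : ℕ → Fin m => b i := continuous_apply i
      have hcast : Continuous fun x : Fin m => ((x : ℕ) : ℝ) := continuous_of_discreteTopology
      exact (hcast.comp hap).div_const _
    · exact (summable_geometric_of_lt_one (by positivity) hc1).mul_left _
    · intro i b
      have h1 : ((b i : ℕ) : ℝ) ≤ m := by exact_mod_cast (b i).2.le
      have h2 : (0:ℝ) < (d:ℝ)^(i+1) := by positivity
      rw [Real.norm_eq_abs, abs_of_nonneg (by positivity)]
      rw [div_le_iff₀ h2]
      calc ((b i : ℕ) : ℝ) ≤ m := h1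
        _ = (m:ℝ) * (d:ℝ)⁻¹ * (d:ℝ)⁻¹^i * (d:ℝ)^(i+1) := by
            rw [pow_succ]
            rw [show (m:ℝ) * (d:ℝ)⁻¹ * (d:ℝ)⁻¹^i * ((d:ℝ)^i * d) = m * ((d:ℝ)^i * ((d:ℝ)^i)⁻¹) * (d * (d:ℝ)⁻¹) by ring, mul_inv_cancel₀ (by positivity), mul_inv_cancel₀ (by positivity)]; ring
        _ ≤ _ := le_refl _
  have hrange : Set.range f = lowDigitSet m d := by
    ext x
    constructor
    · rintro ⟨b, rfl⟩
      exact ⟨fun i => (b i : ℕ), fun i => (b i).2, rfl⟩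
    · rintro ⟨b, hbm, rfl⟩
      exact ⟨fun i => ⟨b i, hbm i⟩, rfl⟩
  rw [← hrange]
  exact isCompact_range hcont

section Beta

variable {m d : ℕ}

lemma beta_facts (hd : 1 < d) (hm2 : 2 ≤ m) (hmd : m ≤ d) :
    0 < Real.log m / Real.log d ∧ Real.log m / Real.log d ≤ 1 ∧
    ∀ K : ℕ, (((d:ℝ)^K)⁻¹) ^ (Real.log m / Real.log d) = ((m:ℝ)^K)⁻¹ := by
  have hdpos : (0:ℝ) < d := by positivity
  have hd1 : (1:ℝ) < d := by exact_mod_cast hd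
  have hm1 : (1:ℝ) < m := by exact_mod_cast hm2
  have hlogd : 0 < Real.log d := Real.log_pos hd1
  have hlogm : 0 < Real.log m := Real.log_pos hm1
  have hβpos : 0 < Real.log m / Real.log d := div_pos hlogm hlogd
  have hβ1 : Real.log m / Real.log d ≤ 1 := by
    rw [div_le_one hlogd]
    exact Real.log_le_log (by positivity) (by exact_mod_cast hmd)
  have hdβ : (d:ℝ) ^ (Real.log m / Real.log d) = m := by
    rw [Real.rpow_def_of_pos hdpos, mul_comm, div_mul_cancel₀ _ (ne_of_gt hlogd)]
    exact Real.exp_log (by positivity)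
  refine ⟨hβpos, hβ1, fun K => ?_⟩
  rw [Real.inv_rpow (by positivity), Real.rpow_natCast_mul hdpos.le K _ |>.symm,
    mul_comm, Real.rpow_mul_natCast hdpos.le, hdβ]

lemma rpow_subadd {p : ℝ} (hp : 0 ≤ p) (hp1 : p ≤ 1) {a b : ℝ} (ha : 0 ≤ a) (hb : 0 ≤ b) :
    (a + b) ^ p ≤ a ^ p + b ^ p := by
  have h := NNReal.rpow_add_le_add_rpow a.toNNReal b.toNNReal hp hp1
  have h3 := NNReal.coe_le_coe.mpr h
  simpa [NNReal.coe_rpow, Real.coe_toNNReal _ ha, Real.coe_toNNReal _ hb,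
    Real.coe_toNNReal _ (add_nonneg ha hb), ← Real.toNNReal_add ha hb] using h3

lemma key_finsum (hd : 1 < d) (hm2 : 2 ≤ m) (hmd : m ≤ d)
    (U : ℕ → Set ℝ) (hU : lowDigitSet m d ⊆ ⋃ r, U r)
    (hfin : ∀ r, EMetric.diam (U r) ≠ ⊤) {δ : ℝ} (hδ : 0 < δ) :
    ∃ Fs : Finset ℕ, 1/(2*(m:ℝ)) ≤
      ∑ r ∈ Fs, (Metric.diam (U r) + δ * (1/2)^r) ^ (Real.log m / Real.log d) := by
  obtain ⟨hβpos, hβ1, hpowβ⟩ := beta_facts hd hm2 hmd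
  set β := Real.log m / Real.log d with hβ
  have hdpos : (0:ℝ) < d := by positivity
  have hm1 : (1:ℝ) < m := by exact_mod_cast hm2
  set t : ℕ → ℝ := fun r => Metric.diam (U r) + δ * (1/2)^r with ht
  have htpos : ∀ r, 0 < t r :=
    fun r => add_pos_of_nonneg_of_pos Metric.diam_nonneg (by positivity)
  by_cases hbig : ∃ r, 1 ≤ t r
  · obtain ⟨r, hr⟩ := hbig
    refine ⟨{r}, ?_⟩
    rw [Finset.sum_singleton]
    have h1 : (1:ℝ) ≤ t r ^ β := Real.one_le_rpow hr hβpos.le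
    have h2 : 1/(2*(m:ℝ)) ≤ 1 := by
      rw [div_le_one (by positivity)]; linarith
    linarith
  push_neg at hbig
  have hlev : ∀ r, ∃ n : ℕ, ((d:ℝ)^(n+1))⁻¹ ≤ t r ∧ t r < ((d:ℝ)^n)⁻¹ := by
    intro r
    have hex : ∃ k, ((d:ℝ)^k)⁻¹ ≤ t r := by
      obtain ⟨k, hk⟩ := exists_pow_lt_of_lt_one (htpos r)
        (show (d:ℝ)⁻¹ < 1 by rw [inv_lt_one_iff₀]; right; exact_mod_cast hd)
      exact ⟨k, by rw [← inv_pow]; exact hk.le⟩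
    classical
    have hk0 := Nat.find_spec hex
    have hk0ne : Nat.find hex ≠ 0 := by
      intro h
      rw [h] at hk0
      simp only [pow_zero, inv_one] at hk0
      exact absurd hk0 (not_le.mpr (hbig r))
    refine ⟨Nat.find hex - 1, ?_, ?_⟩
    · have he : Nat.find hex - 1 + 1 = Nat.find hex := by omega
      rw [he]; exact hk0
    · have hmin := Nat.find_min hex (show Nat.find hex - 1 < Nat.find hex by omega)
      exact not_le.mp hmin
  choose lev hlev1 hlev2 using hlev
  set V : ℕ → Set ℝ := fun r => ⋃ x ∈ U r, Metric.ball x (δ * (1/2)^r / 2) with hV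
  have hVopen : ∀ r, IsOpen (V r) := fun r => isOpen_biUnion fun x _ => Metric.isOpen_ball
  have hVsub : ∀ r, U r ⊆ V r := fun r x hx =>
    Set.mem_biUnion hx (Metric.mem_ball_self (by positivity))
  have hVdist : ∀ r, ∀ p ∈ V r, ∀ q ∈ V r, |p - q| < ((d:ℝ)^(lev r))⁻¹ := by
    intro r p hp q hq
    simp only [hV, Set.mem_iUnion, exists_prop] at hp hq
    obtain ⟨x, hx, hpx⟩ := hp
    obtain ⟨y, hy, hqy⟩ := hq
    have hbnd : Bornology.IsBounded (U r) := Metric.isBounded_iff_ediam_ne_top.mpr (hfin r)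
    have h1 : dist p q ≤ dist p x + dist x y + dist y q := dist_triangle4 p x y q
    have h2 : dist x y ≤ Metric.diam (U r) := Metric.dist_le_diam_of_mem hbnd hx hy
    have h3 : dist p x < δ * (1/2)^r / 2 := Metric.mem_ball.mp hpx
    have h4 : dist y q < δ * (1/2)^r / 2 := by rw [dist_comm]; exact Metric.mem_ball.mp hqy
    have h5 : dist p q < t r := by rw [ht]; dsimp only; rw [Metric.mem_ball] at hpx; linarith
    rw [← Real.dist_eq]
    exact lt_trans h5 (hlev2 r)
  obtain ⟨Fs, hFs⟩ := (isCompact_lowDigitSet m d hd).elim_finite_subcover V hVopen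
    (hU.trans (Set.iUnion_mono hVsub))
  set N := Fs.sup lev with hN
  have hm0 : 0 < m := by omega
  have hcards : ∀ r ∈ Fs,
      (Finset.univ.filter (fun w : Fin N → Fin m => valw d w ∈ V r)).card ≤ 2 * m ^ (N - lev r) :=
    fun r hr => counting d hd hm0 hmd (Finset.le_sup hr) (V r) (hVdist r)
  have hcover_cnt : m^N ≤ ∑ r ∈ Fs,
      (Finset.univ.filter (fun w : Fin N → Fin m => valw d w ∈ V r)).card := by
    have huniv : (Finset.univ : Finset (Fin N → Fin m)) ⊆
        Fs.biUnion (fun r => Finset.univ.filter (fun w => valw d w ∈ V r)) := by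
      intro w _
      have hmem := hFs (valw_mem d hm0 w)
      rw [Set.mem_iUnion₂] at hmem
      obtain ⟨r, hr, hwr⟩ := hmem
      exact Finset.mem_biUnion.mpr ⟨r, hr, Finset.mem_filter.mpr ⟨Finset.mem_univ _, hwr⟩⟩
    calc m^N = (Finset.univ : Finset (Fin N → Fin m)).card := by simp [Finset.card_univ]
      _ ≤ _ := le_trans (Finset.card_le_card huniv) Finset.card_biUnion_le
  have h2 : ((m:ℝ))^N ≤ ∑ r ∈ Fs, 2 * ((m:ℝ))^(N - lev r) := by
    exact_mod_cast le_trans hcover_cnt (Finset.sum_le_sum hcards)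
  have h3 : ∑ r ∈ Fs, 2*((m:ℝ)^(N - lev r)) = (∑ r ∈ Fs, 2 * ((m:ℝ)^(lev r))⁻¹) * (m:ℝ)^N := by
    rw [Finset.sum_mul]
    refine Finset.sum_congr rfl fun r hr => ?_
    have hlevN : lev r ≤ N := Finset.le_sup hr
    have hmul : (m:ℝ)^(N - lev r) * (m:ℝ)^(lev r) = (m:ℝ)^N := by
      rw [← pow_add]; congr 1; omega
    field_simp
    exact hmul
  have h4 : (1:ℝ) ≤ ∑ r ∈ Fs, 2 * ((m:ℝ)^(lev r))⁻¹ := by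
    rw [h3] at h2
    have hmN : (0:ℝ) < (m:ℝ)^N := by positivity
    nlinarith
  have h5 : ∀ r ∈ Fs, 2 * ((m:ℝ)^(lev r))⁻¹ ≤ 2 * (m:ℝ) * t r ^ β := by
    intro r hr
    have ha : (((d:ℝ)^(lev r + 1))⁻¹) ^ β ≤ t r ^ β :=
      Real.rpow_le_rpow (by positivity) (hlev1 r) hβpos.le
    rw [hpowβ (lev r + 1)] at ha
    have hb : ((m:ℝ)^(lev r))⁻¹ = (m:ℝ) * ((m:ℝ)^(lev r + 1))⁻¹ := by
      rw [pow_succ]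
      field_simp
    rw [hb]
    calc 2 * ((m:ℝ) * ((m:ℝ)^(lev r + 1))⁻¹) ≤ 2 * ((m:ℝ) * t r ^ β) := by
          have : (0:ℝ) < m := by positivity
          nlinarith
      _ = 2 * (m:ℝ) * t r ^ β := by ring
  have h6 : (1:ℝ) ≤ 2 * (m:ℝ) * ∑ r ∈ Fs, t r ^ β := by
    calc (1:ℝ) ≤ ∑ r ∈ Fs, 2 * ((m:ℝ)^(lev r))⁻¹ := h4
      _ ≤ ∑ r ∈ Fs, 2 * (m:ℝ) * t r ^ β := Finset.sum_le_sum h5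
      _ = 2 * (m:ℝ) * ∑ r ∈ Fs, t r ^ β := by rw [Finset.mul_sum]
  refine ⟨Fs, ?_⟩
  rw [div_le_iff₀ (by positivity)]
  have hsum : ∑ r ∈ Fs, (Metric.diam (U r) + δ * (1/2)^r) ^ β = ∑ r ∈ Fs, t r ^ β := rfl
  rw [hsum]
  linarith

end Beta

lemma cover_bound (m d : ℕ) (hd : 1 < d) (hm2 : 2 ≤ m) (hmd : m ≤ d)
    (U : ℕ → Set ℝ) (hU : lowDigitSet m d ⊆ ⋃ r, U r) :
    ENNReal.ofReal (1 / (2 * m)) ≤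
      ∑' r : ℕ, EMetric.diam (U r) ^ (Real.log m / Real.log d) := by
  obtain ⟨hβpos, hβ1, hpowβ⟩ := beta_facts hd hm2 hmd
  set β := Real.log m / Real.log d with hβdef
  by_cases htop : ∃ r, EMetric.diam (U r) = ⊤
  · obtain ⟨r, hr⟩ := htop
    have h1 : EMetric.diam (U r) ^ β = ⊤ := by
      rw [hr]; exact ENNReal.top_rpow_of_pos hβpos
    have h2 : (⊤:ℝ≥0∞) ≤ ∑' r, EMetric.diam (U r) ^ β := h1 ▸ ENNReal.le_tsum r
    exact le_trans le_top h2
  push_neg at htop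
  set q : ℝ := (1/2 : ℝ) ^ β with hq
  have hq0 : 0 ≤ q := Real.rpow_nonneg (by norm_num) _
  have hq1 : q < 1 := Real.rpow_lt_one (by norm_num) (by norm_num) hβpos
  set Cg : ℝ := (1 - q)⁻¹ with hCg
  have hCgpos : 0 < Cg := inv_pos.mpr (by linarith)
  refine ENNReal.le_of_forall_pos_le_add fun ε hε _ => ?_
  have hεpos : (0:ℝ) < ε := hε
  set δ : ℝ := ((ε : ℝ) / Cg) ^ (β⁻¹) with hδdef
  have hδpos : 0 < δ := Real.rpow_pos_of_pos (by positivity) _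
  have hδβ : δ ^ β = (ε:ℝ) / Cg := Real.rpow_inv_rpow (by positivity) (ne_of_gt hβpos)
  obtain ⟨Fs, hFs⟩ := key_finsum hd hm2 hmd U hU htop hδpos
  set s : ℕ → ℝ := fun r => Metric.diam (U r) with hs
  have hsnn : ∀ r, 0 ≤ s r := fun r => Metric.diam_nonneg
  have hterm : ∀ r ∈ Fs, (s r + δ * (1/2)^r) ^ β ≤ s r ^ β + δ ^ β * q ^ r := by
    intro r _
    have h1 := rpow_subadd hβpos.le hβ1 (hsnn r) (show (0:ℝ) ≤ δ*(1/2)^r by positivity)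
    have h2 : (δ * (1/2)^r) ^ β = δ ^ β * q ^ r := by
      rw [Real.mul_rpow hδpos.le (by positivity)]
      congr 1
      rw [← Real.rpow_natCast (1/2 : ℝ) r, ← Real.rpow_mul (by norm_num), mul_comm,
        Real.rpow_mul (by norm_num), Real.rpow_natCast]
    rw [← h2]
    exact h1
  have hgeom : ∑ r ∈ Fs, q ^ r ≤ Cg := by
    have hsummable : Summable (fun r : ℕ => q ^ r) := summable_geometric_of_lt_one hq0 hq1
    calc ∑ r ∈ Fs, q^r ≤ ∑' r : ℕ, q^r := Summable.sum_le_tsum Fs (fun r _ => by positivity) hsummable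
      _ = Cg := tsum_geometric_of_lt_one hq0 hq1
  have hreal : 1/(2*(m:ℝ)) ≤ (∑ r ∈ Fs, s r ^ β) + (ε:ℝ) := by
    have h1 : ∑ r ∈ Fs, (s r + δ*(1/2)^r)^β
        ≤ (∑ r ∈ Fs, s r ^ β) + δ^β * ∑ r ∈ Fs, q^r := by
      calc ∑ r ∈ Fs, (s r + δ*(1/2)^r)^β ≤ ∑ r ∈ Fs, (s r ^ β + δ^β * q^r) :=
            Finset.sum_le_sum hterm
        _ = _ := by rw [Finset.sum_add_distrib, Finset.mul_sum]
    have h2 : δ^β * ∑ r ∈ Fs, q^r ≤ (ε:ℝ) := by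
      rw [hδβ]
      calc (ε:ℝ)/Cg * ∑ r ∈ Fs, q^r ≤ (ε:ℝ)/Cg * Cg :=
            mul_le_mul_of_nonneg_left hgeom (by positivity)
        _ = ε := div_mul_cancel₀ _ (ne_of_gt hCgpos)
    linarith [hFs]
  have hterm2 : ∀ r, ENNReal.ofReal (s r ^ β) = EMetric.diam (U r) ^ β := by
    intro r
    have hdiam : EMetric.diam (U r) = ENNReal.ofReal (s r) := (ENNReal.ofReal_toReal (htop r)).symm
    rcases eq_or_lt_of_le (hsnn r) with h0 | hpos
    · rw [hdiam, ← h0]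
      rw [show ENNReal.ofReal 0 = 0 by simp, ENNReal.zero_rpow_of_pos hβpos,
        Real.zero_rpow (ne_of_gt hβpos)]
      simp
    · rw [hdiam, ENNReal.ofReal_rpow_of_pos hpos]
  calc ENNReal.ofReal (1/(2*(m:ℝ)))
      ≤ ENNReal.ofReal ((∑ r ∈ Fs, s r ^ β) + (ε:ℝ)) := ENNReal.ofReal_le_ofReal hreal
    _ ≤ ENNReal.ofReal (∑ r ∈ Fs, s r ^ β) + ENNReal.ofReal (ε:ℝ) := ENNReal.ofReal_add_le
    _ = (∑ r ∈ Fs, ENNReal.ofReal (s r ^ β)) + (ε : ℝ≥0∞) := by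
        rw [ENNReal.ofReal_sum_of_nonneg (fun r _ => Real.rpow_nonneg (hsnn r) _),
          ENNReal.ofReal_coe_nnreal]
    _ ≤ (∑' r : ℕ, EMetric.diam (U r) ^ β) + (ε : ℝ≥0∞) := by
        refine add_le_add ?_ le_rfl
        calc ∑ r ∈ Fs, ENNReal.ofReal (s r ^ β) = ∑ r ∈ Fs, EMetric.diam (U r) ^ β :=
              Finset.sum_congr rfl fun r _ => hterm2 r
          _ ≤ _ := ENNReal.sum_le_tsum Fs

lemma main_thm (m d : ℕ) (hd : 1 < d) (hm : 1 ≤ m) (hmd : m ≤ d) :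
    ENNReal.ofReal (1 / (2 * m)) ≤ μH[Real.log m / Real.log d] (lowDigitSet m d) ∧
    ∀ U : ℕ → Set ℝ, lowDigitSet m d ⊆ ⋃ r, U r →
      ENNReal.ofReal (1 / (2 * m)) ≤
        ∑' r : ℕ, EMetric.diam (U r) ^ (Real.log m / Real.log d) := by
  rcases eq_or_lt_of_le hm with hm1 | hm2
  · -- m = 1
    have hβ0 : Real.log m / Real.log d = 0 := by rw [← hm1]; simp
    have hle1 : ENNReal.ofReal (1 / (2 * (m:ℝ))) ≤ 1 := by
      apply ENNReal.ofReal_le_one.mpr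
      rw [← hm1]
      norm_num
    constructor
    · rw [MeasureTheory.Measure.hausdorffMeasure_apply]
      refine le_iSup₂_of_le 1 one_pos ?_
      refine le_iInf fun t => le_iInf fun htc => le_iInf fun _ => ?_
      have h0A : (0:ℝ) ∈ lowDigitSet m d := zero_mem_lowDigitSet m d (by omega)
      obtain ⟨n0, hn0⟩ := Set.mem_iUnion.mp (htc h0A)
      calc ENNReal.ofReal (1 / (2 * (m:ℝ))) ≤ 1 := hle1
        _ = ⨆ _ : (t n0).Nonempty, EMetric.diam (t n0) ^ (Real.log m / Real.log d) := by
            rw [iSup_pos ⟨0, hn0⟩, hβ0, ENNReal.rpow_zero]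
        _ ≤ _ := ENNReal.le_tsum n0
    · intro U hU
      have h0A : (0:ℝ) ∈ lowDigitSet m d := zero_mem_lowDigitSet m d (by omega)
      obtain ⟨r0, hr0⟩ := Set.mem_iUnion.mp (hU h0A)
      calc ENNReal.ofReal (1 / (2 * (m:ℝ))) ≤ 1 := hle1
        _ = EMetric.diam (U r0) ^ (Real.log m / Real.log d) := by
            rw [hβ0, ENNReal.rpow_zero]
        _ ≤ _ := ENNReal.le_tsum r0
  · -- 2 ≤ m
    have hm2' : 2 ≤ m := hm2
    obtain ⟨hβpos, hβ1, -⟩ := beta_facts hd hm2' hmd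
    constructor
    · rw [MeasureTheory.Measure.hausdorffMeasure_apply]
      refine le_iSup₂_of_le 1 one_pos ?_
      refine le_iInf fun t => le_iInf fun htc => le_iInf fun _ => ?_
      have heq : ∀ n, (⨆ _ : (t n).Nonempty, EMetric.diam (t n) ^ (Real.log m / Real.log d))
          = EMetric.diam (t n) ^ (Real.log m / Real.log d) := by
        intro n
        by_cases h : (t n).Nonempty
        · rw [iSup_pos h]
        · rw [iSup_neg h, Set.not_nonempty_iff_eq_empty.mp h]
          rw [show EMetric.diam (∅ : Set ℝ) = 0 from Metric.ediam_empty, ENNReal.zero_rpow_of_pos hβpos]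
          rfl
      calc ENNReal.ofReal (1 / (2 * (m:ℝ)))
          ≤ ∑' n, EMetric.diam (t n) ^ (Real.log m / Real.log d) :=
            cover_bound m d hd hm2' hmd t htc
        _ = _ := by
            refine tsum_congr fun n => (heq n).symm
    · intro U hU
      exact cover_bound m d hd hm2' hmd U hU

/-- Lower-bound estimate in Lemma 4: with `β = log m / log d`, the `β`-dimensional
Hausdorff measure of `A_{m,d}` is at least `1/(2m)`; equivalently, every countable
cover `(U_r)` of `A_{m,d}` satisfies `∑_r |U_r|^β ≥ 1/(2m)`. -/
theorem hausdorffMeasure_lowDigitSet_ge (m d : ℕ) (hd : 1 < d) (hm : 1 ≤ m) (hmd : m ≤ d) :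
    ENNReal.ofReal (1 / (2 * m)) ≤ μH[Real.log m / Real.log d] (lowDigitSet m d) ∧
    ∀ U : ℕ → Set ℝ, lowDigitSet m d ⊆ ⋃ r, U r →
      ENNReal.ofReal (1 / (2 * m)) ≤
        ∑' r : ℕ, EMetric.diam (U r) ^ (Real.log m / Real.log d) :=
  main_thm m d hd hm hmd
end
end

section
/- Let m and d be positive integers with d > 1 and 1 ≤ m ≤ d. Then the Hausdorff dimension of A_{m,d} is at most (log m)/(log d). -/
open MeasureTheory
open scoped ENNReal

noncomputable section

/-- Upper bound in Lemma 4: `dim_H(A_{m,d}) ≤ log m / log d`. -/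
theorem dimH_lowDigitSet_le (m d : ℕ) (hd : 1 < d) (hm : 1 ≤ m) (hmd : m ≤ d) :
    dimH (lowDigitSet m d) ≤ ENNReal.ofReal (Real.log m / Real.log d) := by
  have hd1 : (1:ℝ) < (d:ℝ) := by exact_mod_cast hd
  have hd0 : (0:ℝ) < (d:ℝ) := by linarith
  have hm0 : (0:ℝ) < (m:ℝ) := by exact_mod_cast hm
  set s : ℝ := Real.log m / Real.log d with hs
  have hs0 : 0 ≤ s := div_nonneg (Real.log_nonneg (by exact_mod_cast hm)) (Real.log_nonneg hd1.le)
  have hds : (d:ℝ) ^ s = m := by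
    rw [hs, Real.rpow_def_of_pos hd0, mul_comm, div_mul_cancel₀ _ (Real.log_pos hd1).ne', Real.exp_log hm0]
  have hinv0 : (0:ℝ) ≤ (d:ℝ)⁻¹ := by positivity
  have hinv1 : (d:ℝ)⁻¹ < 1 := by
    rw [inv_lt_one_iff₀]; right; exact hd1
  -- the cover
  set c : ∀ n : ℕ, (Fin n → Fin m) → ℝ := fun n f => ∑ i : Fin n, (f i : ℝ) / (d:ℝ) ^ ((i:ℕ) + 1) with hc
  set t : ∀ n : ℕ, (Fin n → Fin m) → Set ℝ := fun n f => Set.Icc (c n f) (c n f + (d:ℝ)⁻¹ ^ n) with ht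
  set r : ℕ → ENNReal := fun n => ENNReal.ofReal ((d:ℝ)⁻¹ ^ n) with hr
  have hr0 : Filter.Tendsto r Filter.atTop (nhds 0) := by
    have h := ENNReal.tendsto_ofReal (tendsto_pow_atTop_nhds_zero_of_lt_one hinv0 hinv1)
    rw [ENNReal.ofReal_zero] at h
    exact h
  have hdiam : ∀ n f, EMetric.diam (t n f) ≤ r n := by
    intro n f
    rw [ht]; show Metric.ediam _ ≤ _; rw [Real.ediam_Icc, add_sub_cancel_left]
  have hcover : ∀ n, lowDigitSet m d ⊆ ⋃ f, t n f := by
    intro n x hx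
    obtain ⟨b, hb, hbx⟩ := hx
    set g : ℕ → ℝ := fun i => (b i : ℝ) / (d:ℝ) ^ (i + 1) with hg
    have hgnn : ∀ i, 0 ≤ g i := fun i => by positivity
    have hG : ∀ i, g i ≤ ((d:ℝ) - 1) * ((d:ℝ)⁻¹) ^ (i + 1) := by
      intro i
      have hb' : (b i : ℝ) ≤ (d:ℝ) - 1 := by
        have : b i + 1 ≤ d := le_trans (hb i) hmd
        have : (b i : ℝ) + 1 ≤ (d:ℝ) := by exact_mod_cast this
        linarith
      show (b i : ℝ) / (d:ℝ) ^ (i + 1) ≤ _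
      rw [div_eq_mul_inv, ← inv_pow]
      exact mul_le_mul_of_nonneg_right hb' (by positivity)
    have hGsum : Summable (fun i => ((d:ℝ) - 1) * ((d:ℝ)⁻¹) ^ (i + 1)) := by
      apply Summable.mul_left
      exact (summable_geometric_of_lt_one hinv0 hinv1).comp_injective (add_left_injective 1)
    have hgsum : Summable g := Summable.of_nonneg_of_le hgnn hG hGsum
    refine Set.mem_iUnion.2 ⟨fun i => ⟨b i, hb i⟩, ?_⟩
    have hcf : c n (fun i => ⟨b i, hb i⟩) = ∑ i ∈ Finset.range n, g i := by
      rw [hc, Finset.sum_range fun i => g i]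
    have hsplit := Summable.sum_add_tsum_nat_add n hgsum
    have htail_nn : 0 ≤ ∑' i, g (i + n) := tsum_nonneg fun i => hgnn _
    have htail_le : ∑' i, g (i + n) ≤ (d:ℝ)⁻¹ ^ n := by
      have h1 : ∑' i, g (i + n) ≤ ∑' i, ((d:ℝ) - 1) * ((d:ℝ)⁻¹) ^ ((i + n) + 1) := by
        refine Summable.tsum_le_tsum (fun i => hG (i + n)) (hgsum.comp_injective (add_left_injective n)) (hGsum.comp_injective (add_left_injective n))
      have h2 : ∑' i : ℕ, ((d:ℝ) - 1) * ((d:ℝ)⁻¹) ^ ((i + n) + 1)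
          = ((d:ℝ) - 1) * ((d:ℝ)⁻¹) ^ (n + 1) * ∑' i : ℕ, ((d:ℝ)⁻¹) ^ i := by
        rw [← tsum_mul_left]
        congr 1 with i
        ring
      have h3 : ∑' i : ℕ, ((d:ℝ)⁻¹) ^ i = (1 - (d:ℝ)⁻¹)⁻¹ := tsum_geometric_of_lt_one hinv0 hinv1
      have h4 : ((d:ℝ) - 1) * ((d:ℝ)⁻¹) ^ (n + 1) * (1 - (d:ℝ)⁻¹)⁻¹ = (d:ℝ)⁻¹ ^ n := by
        have hne : (d:ℝ) ≠ 0 := hd0.ne'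
        have hne1 : (d:ℝ) - 1 ≠ 0 := by linarith
        have h5 : (1 - (d:ℝ)⁻¹) = ((d:ℝ) - 1) / d := by field_simp
        rw [h5, pow_succ]
        field_simp
      calc ∑' i, g (i + n) ≤ _ := h1
        _ = _ := h2
        _ = (d:ℝ)⁻¹ ^ n := by rw [h3, h4]
    constructor
    · rw [hcf, hbx]
      have : (∑ i ∈ Finset.range n, g i) + ∑' i, g (i + n) = ∑' i, g i := hsplit
      nlinarith [htail_nn]
    · rw [hcf, hbx]
      have : (∑ i ∈ Finset.range n, g i) + ∑' i, g (i + n) = ∑' i, g i := hsplit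
      nlinarith [htail_le]
  -- the measure bound
  have hsum : ∀ n : ℕ, (∑ f : Fin n → Fin m, EMetric.diam (t n f) ^ s) ≤ 1 := by
    intro n
    have hdle : ∀ f, EMetric.diam (t n f) ^ s ≤ ENNReal.ofReal ((m:ℝ)⁻¹ ^ n) := by
      intro f
      have h1 : EMetric.diam (t n f) ^ s ≤ (r n) ^ s :=
        ENNReal.rpow_le_rpow (hdiam n f) hs0
      have h2 : (r n) ^ s = ENNReal.ofReal (((d:ℝ)⁻¹ ^ n) ^ s) := by
        rw [hr, ← ENNReal.ofReal_rpow_of_nonneg (by positivity) hs0]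
      have h3 : (((d:ℝ)⁻¹ ^ n) ^ s) = (m:ℝ)⁻¹ ^ n := by
        rw [← Real.rpow_natCast ((d:ℝ)⁻¹) n, ← Real.rpow_mul hinv0, mul_comm,
          Real.rpow_mul hinv0, Real.inv_rpow hd0.le, hds, Real.rpow_natCast]
      rw [h2, h3] at h1
      exact h1
    calc (∑ f : Fin n → Fin m, EMetric.diam (t n f) ^ s)
        ≤ ∑ _f : Fin n → Fin m, ENNReal.ofReal ((m:ℝ)⁻¹ ^ n) := Finset.sum_le_sum fun f _ => hdle f
      _ = (m ^ n : ℕ) * ENNReal.ofReal ((m:ℝ)⁻¹ ^ n) := by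
          rw [Finset.sum_const, nsmul_eq_mul]
          congr 1
          simp [Fintype.card_fun]
      _ = ENNReal.ofReal ((m:ℝ) ^ n * (m:ℝ)⁻¹ ^ n) := by
          rw [ENNReal.ofReal_mul (by positivity)]
          congr 1
          rw [ENNReal.ofReal_pow hm0.le]
          norm_cast
      _ = 1 := by
          rw [← mul_pow, mul_inv_cancel₀ hm0.ne', one_pow, ENNReal.ofReal_one]
  have hμ : μH[s] (lowDigitSet m d) ≤ 1 := by
    refine le_trans (Measure.hausdorffMeasure_le_liminf_sum s (lowDigitSet m d) r hr0 t
      (Filter.Eventually.of_forall fun n => hdiam n)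
      (Filter.Eventually.of_forall hcover)) ?_
    refine Filter.liminf_le_of_frequently_le ?_ (by isBoundedDefault)
    exact Filter.Frequently.of_forall fun n => hsum n
  have : dimH (lowDigitSet m d) ≤ (s.toNNReal : ℝ≥0∞) := by
    refine dimH_le_of_hausdorffMeasure_ne_top ?_
    rw [Real.coe_toNNReal s hs0]
    exact ne_top_of_le_ne_top ENNReal.one_ne_top hμ
  rwa [ENNReal.ofReal]
end
end

section
/- Let d be an integer greater than 1 and let n > 1. Let C = {c_1, ..., c_n} and C' = {c'_1, ..., c'_n} be cycles for the d-map, with representatives 0 < c_1 < c_2 < ... < c_n < 1 and 0 < c'_1 < c'_2 < ... < c'_n < 1 in [0,1). Let σ, σ' : {1, ..., n} → {1, ..., n} be the index maps determined by T_d(c_r) = c_{σ(r)} and T_d(c'_r) = c'_{σ'(r)} for all r. If σ = σ' and for every 1 ≤ r ≤ n the leading base-d digits agree, i.e. ⌊d·c_r⌋ = ⌊d·c'_r⌋, then c_r = c'_r for all r, so C = C'. -/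
open MeasureTheory

noncomputable section

/-- Lemma 3 (rigidity): a cycle for the `d`-map is determined by its index map `σ`
(the combinatorics of how the `d`-map permutes the ordered points) together with the
leading base-`d` digit of each of its points. -/
theorem cycle_determined_by_sigma_and_digits (d n : ℕ) (hd : 1 < d) (hn : 1 < n)
    (c c' : Fin n → ℝ) (σ : Fin n → Fin n)
    (hmono : StrictMono c) (hmono' : StrictMono c')
    (hrange : ∀ i, c i ∈ Set.Ioo (0 : ℝ) 1) (hrange' : ∀ i, c' i ∈ Set.Ioo (0 : ℝ) 1)
    (hcyc : IsCycle d (Finset.image (fun i : Fin n => ((c i : ℝ) : UnitAddCircle)) Finset.univ))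
    (hcyc' : IsCycle d (Finset.image (fun i : Fin n => ((c' i : ℝ) : UnitAddCircle)) Finset.univ))
    (hσ : ∀ r : Fin n, dMap d ((c r : ℝ) : UnitAddCircle) = ((c (σ r) : ℝ) : UnitAddCircle))
    (hσ' : ∀ r : Fin n, dMap d ((c' r : ℝ) : UnitAddCircle) = ((c' (σ r) : ℝ) : UnitAddCircle))
    (hdig : ∀ r : Fin n, ⌊(d : ℝ) * c r⌋ = ⌊(d : ℝ) * c' r⌋) :
    ∀ r : Fin n, c r = c' r := by
  -- Key functional equation: d * b r - ⌊d * b r⌋ = b (σ r)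
  have key : ∀ (b : Fin n → ℝ), (∀ i, b i ∈ Set.Ioo (0:ℝ) 1) →
      (∀ r, dMap d ((b r : ℝ) : UnitAddCircle) = ((b (σ r) : ℝ) : UnitAddCircle)) →
      ∀ r, (d : ℝ) * b r - ⌊(d : ℝ) * b r⌋ = b (σ r) := by
    intro b hb hbσ r
    have h := hbσ r
    have hcoe : dMap d ((b r : ℝ) : UnitAddCircle) = (((d : ℝ) * b r : ℝ) : UnitAddCircle) := by
      show (d : ℕ) • ((b r : ℝ) : UnitAddCircle) = _
      push_cast [← AddCircle.coe_nsmul]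
      ring_nf
    rw [hcoe] at h
    rw [show (((((d:ℝ) * b r : ℝ)) : UnitAddCircle) = ((b (σ r) : ℝ) : UnitAddCircle)) ↔ _
      from QuotientAddGroup.eq_iff_sub_mem, AddSubgroup.mem_zmultiples_iff] at h
    obtain ⟨k, hk⟩ := h
    have hk' : (d : ℝ) * b r - b (σ r) = k := by rw [← hk]; simp
    have hfloor : ⌊(d : ℝ) * b r⌋ = k := by
      have : (d : ℝ) * b r = k + b (σ r) := by linarith
      rw [this, Int.floor_eq_iff]
      constructor
      · linarith [(hb (σ r)).1]
      · push_cast; linarith [(hb (σ r)).2]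
    rw [hfloor]; linarith
  have keyc := key c hrange hσ
  have keyc' := key c' hrange' hσ'
  -- Differences scale by d
  have hstep : ∀ r, c (σ r) - c' (σ r) = (d : ℝ) * (c r - c' r) := by
    intro r
    have h1 := keyc r
    have h2 := keyc' r
    have h3 := hdig r
    rw [h3] at h1
    linarith
  have hiter : ∀ (k : ℕ) (r : Fin n), c (σ^[k] r) - c' (σ^[k] r) = (d : ℝ)^k * (c r - c' r) := by
    intro k
    induction k with
    | zero => intro r; simp
    | succ k ih =>
      intro r
      rw [Function.iterate_succ_apply', hstep, ih]
      ring
  intro r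
  by_contra hne
  have hpos : 0 < |c r - c' r| := abs_pos.mpr (sub_ne_zero.mpr hne)
  obtain ⟨k, hk⟩ := pow_unbounded_of_one_lt (1 / |c r - c' r|) (show (1:ℝ) < d by exact_mod_cast hd)
  have hbound : |c (σ^[k] r) - c' (σ^[k] r)| < 1 := by
    have h1 := hrange (σ^[k] r)
    have h2 := hrange' (σ^[k] r)
    rw [abs_lt]
    constructor <;> [linarith [h1.1, h2.2]; linarith [h1.2, h2.1]]
  rw [hiter, abs_mul, abs_pow, abs_of_nonneg (by positivity : (0:ℝ) ≤ (d:ℝ))] at hbound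
  have : 1 / |c r - c' r| < (d:ℝ)^k := hk
  rw [div_lt_iff₀ hpos] at this
  nlinarith
end
end
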